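/- arXiv:1904.04059 — 6 statements merged into one kernel-verified Lean document; each statement's English description precedes it below -/
import Mathlib

section
/- Let a₁, a₂ be complex numbers with 0 < |a₁| ≤ |a₂| < 1 such that a₁^k ≠ a₂^l for every pair of natural numbers (k, l) ≠ (0, 0). Let P, Q : ℂ × ℂ → ℂ be entire functions (complex differentiable on all of ℂ²), with Q not identically zero, satisfying P(a₁ z₁, a₂ z₂) · Q(z₁, z₂) = P(z₁, z₂) · Q(a₁ z₁, a₂ z₂) for all (z₁, z₂) ∈ ℂ². Then there exists λ ∈ ℂ such that P(z₁, z₂) = λ · Q(z₁, z₂) for all (z₁, z₂) ∈ ℂ². -/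
open Complex MeasureTheory Finset Metric Polynomial
open scoped Real Topology intervalIntegral

noncomputable section StmtAux

/-- 1-variable Taylor coefficient at `0`. -/
def co1 (g : ℂ → ℂ) (k : ℕ) : ℂ := (cauchyPowerSeries g 0 1).coeff k

lemma co1_hasSum {g : ℂ → ℂ} (hg : Differentiable ℂ g) (w : ℂ) :
    HasSum (fun k => co1 g k * w ^ k) (g w) := by
  have h := (hg.hasFPowerSeriesOnBall 0 one_pos).hasSum
    (y := w) (by simp [EMetric.mem_ball, edist_lt_top])
  simp only [FormalMultilinearSeries.apply_eq_pow_smul_coeff, zero_add, smul_eq_mul] at h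
  simpa [co1, mul_comm] using h

lemma co1_norm_summable {g : ℂ → ℂ} (hg : Differentiable ℂ g) (w : ℂ) :
    Summable (fun k => ‖co1 g k * w ^ k‖) := by
  have hball := hg.hasFPowerSeriesOnBall 0 one_pos
  have hrad : (‖w‖₊ : ENNReal) < (cauchyPowerSeries g 0 1).radius := by
    have := hball.r_le
    exact lt_of_lt_of_le (by simp) this
  have hs := (cauchyPowerSeries g 0 1).summable_norm_mul_pow hrad
  refine hs.congr fun k => ?_
  rw [norm_mul, norm_pow, FormalMultilinearSeries.norm_apply_eq_norm_coef]
  simp [co1]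

lemma co1_unique {g : ℂ → ℂ} (hg : Differentiable ℂ g) {c : ℕ → ℂ}
    (h : ∀ w : ℂ, HasSum (fun k => c k * w ^ k) (g w)) : ∀ k, c k = co1 g k := by
  set p : FormalMultilinearSeries ℂ ℂ ℂ := FormalMultilinearSeries.ofScalars ℂ c with hp
  -- coefficients of p
  have hcoeff : ∀ k, p.coeff k = c k := by
    intro k
    have := FormalMultilinearSeries.ofScalars_apply_eq (E := ℂ) c (1:ℂ) k
    simp only [FormalMultilinearSeries.coeff, hp]
    rw [show (1 : Fin k → ℂ) = (fun _ => (1:ℂ)) from rfl, this]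
    simp
  -- bound on coefficients
  obtain ⟨C, hC⟩ : ∃ C : ℝ, ∀ k, ‖c k * 2 ^ k‖ ≤ C := by
    have hs := (h 2).summable
    have ht : Filter.Tendsto (fun k => ‖c k * (2:ℂ) ^ k‖) Filter.atTop (nhds 0) := by
      simpa using hs.tendsto_atTop_zero.norm
    obtain ⟨C, hC⟩ := ht.bddAbove_range
    exact ⟨C, fun k => hC (Set.mem_range_self k)⟩
  have hrad : (1 : NNReal) ≤ p.radius := by
    apply FormalMultilinearSeries.le_radius_of_bound _ C
    intro n
    have : ‖p n‖ = ‖c n‖ := FormalMultilinearSeries.ofScalars_norm ℂ c n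
    rw [this]
    have h2 : ‖c n‖ ≤ ‖c n * 2 ^ n‖ := by
      rw [norm_mul]
      nlinarith [norm_nonneg (c n), norm_pow (2:ℂ) n, one_le_pow₀ (by norm_num : (1:ℝ) ≤ ‖(2:ℂ)‖) (n := n), norm_nonneg ((2:ℂ)^n)]
    calc ‖c n‖ * (1:NNReal) ^ n = ‖c n‖ := by simp
    _ ≤ ‖c n * 2 ^ n‖ := h2
    _ ≤ C := hC n
  have hpb : HasFPowerSeriesOnBall g p 0 1 :=
    { r_le := hrad
      r_pos := one_pos
      hasSum := by
        intro y _
        simpa [FormalMultilinearSeries.apply_eq_pow_smul_coeff, hcoeff, smul_eq_mul, mul_comm]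
          using h y }
  have h2 := (hg.hasFPowerSeriesOnBall 0 one_pos).hasFPowerSeriesAt
  have := hpb.hasFPowerSeriesAt.eq_formalMultilinearSeries h2
  intro k
  rw [← hcoeff k, this]; rfl

lemma co1_mul {f g : ℂ → ℂ} (hf : Differentiable ℂ f) (hg : Differentiable ℂ g) (K : ℕ) :
    co1 (fun z => f z * g z) K
      = ∑ kl ∈ Finset.HasAntidiagonal.antidiagonal K, co1 f kl.1 * co1 g kl.2 := by
  refine (co1_unique (hf.mul hg) (c := fun K => ∑ kl ∈ Finset.HasAntidiagonal.antidiagonal K,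
      co1 f kl.1 * co1 g kl.2) ?_ K).symm
  intro w
  have hA := co1_hasSum hf w
  have hB := co1_hasSum hg w
  have hA' := co1_norm_summable hf w
  have hB' := co1_norm_summable hg w
  have hsum : Summable fun n => ∑ kl ∈ Finset.HasAntidiagonal.antidiagonal n,
      (co1 f kl.1 * w ^ kl.1) * (co1 g kl.2 * w ^ kl.2) :=
    (summable_norm_sum_mul_antidiagonal_of_summable_norm hA' hB').of_norm
  have htsum := tsum_mul_tsum_eq_tsum_sum_antidiagonal_of_summable_norm hA' hB'
  rw [hA.tsum_eq, hB.tsum_eq] at htsum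
  have hkey : HasSum (fun n => ∑ kl ∈ Finset.HasAntidiagonal.antidiagonal n,
      (co1 f kl.1 * w ^ kl.1) * (co1 g kl.2 * w ^ kl.2)) (f w * g w) :=
    hsum.hasSum_iff.mpr htsum.symm
  convert hkey using 2 with n
  rw [Finset.sum_mul]
  refine Finset.sum_congr rfl fun kl hkl => ?_
  have := Finset.HasAntidiagonal.mem_antidiagonal.mp hkl
  rw [← this, pow_add]
  ring
  rfl

lemma co1_comp_mul {g : ℂ → ℂ} (hg : Differentiable ℂ g) (b : ℂ) (k : ℕ) :
    co1 (fun z => g (b * z)) k = b ^ k * co1 g k := by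
  have hgb : Differentiable ℂ (fun z => g (b * z)) :=
    hg.comp (differentiable_id.const_mul b)
  refine (co1_unique hgb (c := fun k => b ^ k * co1 g k) ?_ k).symm
  intro w
  have := co1_hasSum hg (b * w)
  refine this.congr_fun fun n => by rw [mul_pow]; ring

lemma co1_smul {g : ℂ → ℂ} (hg : Differentiable ℂ g) (b : ℂ) (k : ℕ) :
    co1 (fun z => b * g z) k = b * co1 g k := by
  refine (co1_unique (hg.const_mul b) (c := fun k => b * co1 g k) ?_ k).symm
  intro w
  exact ((co1_hasSum hg w).mul_left b).congr_fun fun n => by ring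

lemma co1_sub {f g : ℂ → ℂ} (hf : Differentiable ℂ f) (hg : Differentiable ℂ g) (k : ℕ) :
    co1 (fun z => f z - g z) k = co1 f k - co1 g k := by
  refine (co1_unique (hf.sub hg) (c := fun k => co1 f k - co1 g k) ?_ k).symm
  intro w
  exact ((co1_hasSum hf w).sub (co1_hasSum hg w)).congr_fun fun n => by ring

lemma co1_add {f g : ℂ → ℂ} (hf : Differentiable ℂ f) (hg : Differentiable ℂ g) (k : ℕ) :
    co1 (fun z => f z + g z) k = co1 f k + co1 g k := by
  refine (co1_unique (hf.add hg) (c := fun k => co1 f k + co1 g k) ?_ k).symm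
  intro w
  exact ((co1_hasSum hf w).add (co1_hasSum hg w)).congr_fun fun n => by ring

lemma co1_fun_sum {ι : Type*} (s : Finset ι) (f : ι → ℂ → ℂ)
    (hf : ∀ i ∈ s, Differentiable ℂ (f i)) (k : ℕ) :
    co1 (fun z => ∑ i ∈ s, f i z) k = ∑ i ∈ s, co1 (f i) k := by
  classical
  induction s using Finset.induction with
  | empty =>
      simp only [Finset.sum_empty]
      refine (co1_unique (differentiable_const 0) (c := fun _ => 0) ?_ k).symm
      intro w
      simpa using hasSum_zero
  | insert _ _ hni ih =>
      rename_i a s'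
      have h1 : Differentiable ℂ (f a) := hf a (Finset.mem_insert_self a s')
      have h2 : Differentiable ℂ (fun z => ∑ i ∈ s', f i z) :=
        Differentiable.fun_sum fun i hi => hf i (Finset.mem_insert_of_mem hi)
      rw [show (fun z => ∑ i ∈ insert a s', f i z) = fun z => f a z + ∑ i ∈ s', f i z by
            funext z; rw [Finset.sum_insert hni],
          co1_add h1 h2, ih (fun i hi => hf i (Finset.mem_insert_of_mem hi)),
          Finset.sum_insert hni]

lemma co1_zero_eq (k : ℕ) : co1 (fun _ => (0:ℂ)) k = 0 :=
  ((co1_unique (differentiable_const 0) (c := fun _ => 0) (fun w => by simpa using hasSum_zero) k)).symm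

lemma co1_eq_zero_all {g : ℂ → ℂ} (hg : Differentiable ℂ g) (h : ∀ k, co1 g k = 0) :
    ∀ w, g w = 0 := by
  intro w
  have := co1_hasSum hg w
  simp only [h, zero_mul] at this
  exact this.unique hasSum_zero

def pk (F : ℂ × ℂ → ℂ) (k : ℕ) (w : ℂ) : ℂ := co1 (fun z => F (z, w)) k

lemma slice1 {F : ℂ × ℂ → ℂ} (hF : Differentiable ℂ F) (w : ℂ) :
    Differentiable ℂ (fun z => F (z, w)) :=
  hF.comp (differentiable_id.prodMk (differentiable_const w))

lemma slice2 {F : ℂ × ℂ → ℂ} (hF : Differentiable ℂ F) (z : ℂ) :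
    Differentiable ℂ (fun w => F (z, w)) :=
  hF.comp ((differentiable_const z).prodMk differentiable_id)

lemma pk_eq_integral (F : ℂ × ℂ → ℂ) (k : ℕ) (w : ℂ) :
    pk F k w = (2 * π * I : ℂ)⁻¹ •
      ∫ θ in (0:ℝ)..(2 * π), ((circleMap 0 1 θ)⁻¹ ^ k * I) * F (circleMap 0 1 θ, w) := by
  have h := cauchyPowerSeries_apply (fun z => F (z, w)) 0 1 k 1
  rw [pk, co1, FormalMultilinearSeries.coeff, show (1 : Fin k → ℂ) = (fun _ => (1:ℂ)) from rfl, h]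
  rw [circleIntegral]
  congr 1
  refine intervalIntegral.integral_congr fun θ _ => ?_
  have hne : circleMap 0 1 θ ≠ 0 := circleMap_ne_center one_ne_zero
  rw [deriv_circleMap]
  have : circleMap 0 1 θ - 0 = circleMap 0 1 θ := by ring
  rw [this]
  field_simp
  simp only [smul_eq_mul, one_div]
  have hc : circleMap 0 1 θ * (circleMap 0 1 θ)⁻¹ = 1 := mul_inv_cancel₀ hne
  linear_combination (I * (circleMap 0 1 θ)⁻¹ ^ k * F (circleMap 0 1 θ, w)) * hc

lemma deriv_slice_bound {g : ℂ → ℂ} (hg : Differentiable ℂ g) (x : ℂ) {M : ℝ}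
    (hM : ∀ v, dist v x ≤ 1 → ‖g v‖ ≤ M) : ‖deriv g x‖ ≤ M := by
  have hball := hg.hasFPowerSeriesOnBall x one_pos
  have hd : deriv g x = (cauchyPowerSeries g x 1).coeff 1 := hball.hasFPowerSeriesAt.deriv
  rw [hd, ← FormalMultilinearSeries.norm_apply_eq_norm_coef]
  have hle := norm_cauchyPowerSeries_le g x 1 1
  have hint : (∫ θ in (0:ℝ)..2 * π, ‖g (circleMap x 1 θ)‖) ≤ ∫ _ in (0:ℝ)..2 * π, M := by
    apply intervalIntegral.integral_mono_on Real.two_pi_pos.le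
    · exact ((hg.continuous.comp (continuous_circleMap x 1)).norm).intervalIntegrable 0 (2 * π)
    · exact intervalIntegrable_const
    · intro θ _
      apply hM
      have := circleMap_mem_sphere x zero_le_one θ
      simp only [mem_sphere] at this
      exact this.le
  rw [intervalIntegral.integral_const, smul_eq_mul] at hint
  calc ‖cauchyPowerSeries g x 1 1‖
      ≤ ((2 * π)⁻¹ * ∫ θ in (0:ℝ)..2 * π, ‖g (circleMap x 1 θ)‖) * |(1:ℝ)|⁻¹ ^ 1 := hle
    _ ≤ ((2 * π)⁻¹ * ((2 * π - 0) * M)) * |(1:ℝ)|⁻¹ ^ 1 :=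
        mul_le_mul_of_nonneg_right
          (mul_le_mul_of_nonneg_left hint (by positivity)) (by positivity)
    _ = M := by
        rw [sub_zero]
        field_simp
        simp

lemma pk_differentiable {F : ℂ × ℂ → ℂ} (hF : Differentiable ℂ F) (k : ℕ) :
    Differentiable ℂ (pk F k) := by
  intro w₀
  set e : ℝ → ℂ := circleMap 0 1 with he
  set ψ : ℝ → ℂ := fun θ => (e θ)⁻¹ ^ k * I with hψ
  have hene : ∀ θ, e θ ≠ 0 := fun θ => circleMap_ne_center one_ne_zero
  have hψc : Continuous ψ := by
    apply Continuous.mul _ continuous_const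
    exact ((continuous_circleMap 0 1).inv₀ hene).pow k
  have hψ1 : ∀ θ, ‖ψ θ‖ = 1 := by
    intro θ
    rw [hψ]
    simp only [norm_mul, norm_pow, norm_inv, Complex.norm_I, mul_one]
    rw [he]
    simp [norm_circleMap_zero]
  -- bound on F over compact set
  obtain ⟨C, hC⟩ : ∃ C : ℝ, ∀ p ∈ (sphere (0:ℂ) 1) ×ˢ closedBall w₀ 2, ‖F p‖ ≤ C :=
    ((isCompact_sphere (0:ℂ) 1).prod (isCompact_closedBall w₀ 2)).exists_bound_of_continuousOn
      (hF.continuous.continuousOn)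
  set D2 : ℂ → ℂ → ℂ := fun z w => fderiv ℂ F (z, w) ((0:ℂ), (1:ℂ)) with hD2def
  have hD2 : ∀ z w, HasDerivAt (fun v => F (z, v)) (D2 z w) w := by
    intro z w
    have h1 : HasDerivAt (fun v : ℂ => (z, v)) ((0:ℂ), (1:ℂ)) w :=
      (hasDerivAt_const w z).prodMk (hasDerivAt_id w)
    exact (hF (z, w)).hasFDerivAt.comp_hasDerivAt w h1
  have hD2bound : ∀ θ, ∀ x ∈ ball w₀ 1, ‖D2 (e θ) x‖ ≤ C := by
    intro θ x hx
    have : D2 (e θ) x = deriv (fun v => F (e θ, v)) x := ((hD2 (e θ) x).deriv).symm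
    rw [this]
    apply deriv_slice_bound (slice2 hF (e θ)) x
    intro v hv
    apply hC
    constructor
    · rw [he]; exact circleMap_mem_sphere 0 zero_le_one θ
    · have : dist v w₀ ≤ 2 := by
        have h2 := dist_triangle v x w₀
        have : dist x w₀ ≤ 1 := (mem_ball.mp hx).le
        linarith
      exact mem_closedBall.mpr this
  have key := intervalIntegral.hasDerivAt_integral_of_dominated_loc_of_deriv_le
    (F := fun x θ => ψ θ * F (e θ, x)) (F' := fun x θ => ψ θ * D2 (e θ) x)
    (x₀ := w₀) (a := 0) (b := 2 * π) (μ := volume) (bound := fun _ => C) (s := ball w₀ 1)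
    (ball_mem_nhds w₀ one_pos)
    (by
      filter_upwards with x
      exact ((hψc.mul (hF.continuous.comp
        ((continuous_circleMap 0 1).prodMk continuous_const))).aestronglyMeasurable).restrict)
    ((hψc.mul (hF.continuous.comp
        ((continuous_circleMap 0 1).prodMk continuous_const))).intervalIntegrable 0 (2 * π))
    (by
      apply Measurable.aestronglyMeasurable
      apply (hψc.measurable).mul
      have hm : Measurable fun p : ℂ × ℂ => fderiv ℂ F p ((0:ℂ), (1:ℂ)) :=
        measurable_fderiv_apply_const ℂ F ((0:ℂ), (1:ℂ))
      exact hm.comp (((continuous_circleMap 0 1).prodMk continuous_const).measurable))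
    (by
      filter_upwards with θ _ x hx
      rw [norm_mul, hψ1 θ, one_mul]
      exact hD2bound θ x hx)
    intervalIntegrable_const
    (by
      filter_upwards with θ _ x _
      exact (hD2 (e θ) x).const_mul (ψ θ))
  obtain ⟨-, hderiv⟩ := key
  have : pk F k = fun w => (2 * π * I : ℂ)⁻¹ •
      ∫ θ in (0:ℝ)..(2 * π), ψ θ * F (e θ, w) := funext fun w => pk_eq_integral F k w
  rw [this]
  exact (hderiv.differentiableAt.const_smul ((2 * π * I : ℂ)⁻¹))

def co2 (F : ℂ × ℂ → ℂ) (k l : ℕ) : ℂ := co1 (pk F k) l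

lemma pk_mul {F G : ℂ × ℂ → ℂ} (hF : Differentiable ℂ F) (hG : Differentiable ℂ G) (K : ℕ) :
    pk (fun zw => F zw * G zw) K
      = fun w => ∑ kl ∈ Finset.HasAntidiagonal.antidiagonal K, pk F kl.1 w * pk G kl.2 w := by
  funext w
  exact co1_mul (slice1 hF w) (slice1 hG w) K

lemma co2_mul {F G : ℂ × ℂ → ℂ} (hF : Differentiable ℂ F) (hG : Differentiable ℂ G)
    (K L : ℕ) :
    co2 (fun zw => F zw * G zw) K L
      = ∑ kl ∈ Finset.HasAntidiagonal.antidiagonal K, ∑ lj ∈ Finset.HasAntidiagonal.antidiagonal L,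
          co2 F kl.1 lj.1 * co2 G kl.2 lj.2 := by
  rw [co2, pk_mul hF hG K, co1_fun_sum _ _
    (fun kl _ => (pk_differentiable hF kl.1).mul (pk_differentiable hG kl.2))]
  exact Finset.sum_congr rfl fun kl _ =>
    co1_mul (pk_differentiable hF kl.1) (pk_differentiable hG kl.2) L

lemma pk_scale {F : ℂ × ℂ → ℂ} (hF : Differentiable ℂ F) (b₁ b₂ : ℂ) (k : ℕ) :
    pk (fun zw => F (b₁ * zw.1, b₂ * zw.2)) k = fun w => b₁ ^ k * pk F k (b₂ * w) := by
  funext w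
  exact co1_comp_mul (slice1 hF (b₂ * w)) b₁ k

lemma co2_scale {F : ℂ × ℂ → ℂ} (hF : Differentiable ℂ F) (b₁ b₂ : ℂ) (k l : ℕ) :
    co2 (fun zw => F (b₁ * zw.1, b₂ * zw.2)) k l = b₁ ^ k * b₂ ^ l * co2 F k l := by
  rw [co2, pk_scale hF b₁ b₂ k]
  have hd : Differentiable ℂ (fun w => pk F k (b₂ * w)) :=
    (pk_differentiable hF k).comp (differentiable_id.const_mul b₂)
  rw [co1_smul hd (b₁ ^ k) l, co1_comp_mul (pk_differentiable hF k) b₂ l, co2]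
  ring

lemma co2_sub_smul {F G : ℂ × ℂ → ℂ} (hF : Differentiable ℂ F) (hG : Differentiable ℂ G)
    (lam : ℂ) (k l : ℕ) :
    co2 (fun zw => F zw - lam * G zw) k l = co2 F k l - lam * co2 G k l := by
  have h1 : pk (fun zw => F zw - lam * G zw) k
      = fun w => pk F k w - lam * pk G k w := by
    funext w
    rw [pk, show (fun z => F (z, w) - lam * G (z, w))
        = fun z => F (z, w) - (fun z => lam * G (z, w)) z from rfl]
    rw [co1_sub (slice1 hF w) ((slice1 hG w).const_mul lam),
      co1_smul (slice1 hG w) lam, pk, pk]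
  rw [co2, h1, co1_sub (pk_differentiable hF k) ((pk_differentiable hG k).const_mul lam),
    co1_smul (pk_differentiable hG k) lam, co2, co2]

lemma co2_zero_all {F : ℂ × ℂ → ℂ} (hF : Differentiable ℂ F)
    (h : ∀ k l, co2 F k l = 0) : ∀ zw : ℂ × ℂ, F zw = 0 := by
  intro zw
  have hpk : ∀ k w, pk F k w = 0 := fun k w =>
    co1_eq_zero_all (pk_differentiable hF k) (h k) w
  have : F (zw.1, zw.2) = 0 :=
    co1_eq_zero_all (slice1 hF zw.2) (fun k => hpk k zw.2) zw.1
  simpa using this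

lemma vandermonde_zero {ι : Type*} [DecidableEq ι] (s : Finset ι) (cc : ι → ℂ)
    (hinj : ∀ i ∈ s, ∀ j ∈ s, cc i = cc j → i = j) (t : ι → ℂ)
    (h : ∀ n : ℕ, ∑ i ∈ s, cc i ^ n * t i = 0) : ∀ i ∈ s, t i = 0 := by
  intro i₀ hi₀
  set φ : Polynomial ℂ := ∏ j ∈ s.erase i₀, (X - C (cc j)) with hφ
  have hstep : ∑ i ∈ s, φ.eval (cc i) * t i = 0 := by
    have heval : ∀ x : ℂ, φ.eval x
        = ∑ n ∈ Finset.range (φ.natDegree + 1), φ.coeff n * x ^ n := fun x =>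
      Polynomial.eval_eq_sum_range x
    calc ∑ i ∈ s, φ.eval (cc i) * t i
        = ∑ i ∈ s, ∑ n ∈ Finset.range (φ.natDegree + 1), φ.coeff n * (cc i ^ n * t i) := by
          refine Finset.sum_congr rfl fun i _ => ?_
          rw [heval, Finset.sum_mul]
          exact Finset.sum_congr rfl fun n _ => by ring
      _ = ∑ n ∈ Finset.range (φ.natDegree + 1), φ.coeff n * ∑ i ∈ s, cc i ^ n * t i := by
          rw [Finset.sum_comm]
          exact Finset.sum_congr rfl fun n _ => by rw [Finset.mul_sum]
      _ = 0 := by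
          refine Finset.sum_eq_zero fun n _ => ?_
          rw [h n, mul_zero]
  have hsingle : ∑ i ∈ s, φ.eval (cc i) * t i = φ.eval (cc i₀) * t i₀ := by
    refine Finset.sum_eq_single_of_mem i₀ hi₀ fun i hi hne => ?_
    have : φ.eval (cc i) = 0 := by
      rw [hφ, eval_prod]
      exact Finset.prod_eq_zero (Finset.mem_erase.mpr ⟨hne, hi⟩) (by simp)
    rw [this, zero_mul]
  have hne : φ.eval (cc i₀) ≠ 0 := by
    rw [hφ, eval_prod]
    refine Finset.prod_ne_zero_iff.mpr fun j hj => ?_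
    have hj' := Finset.mem_erase.mp hj
    simp only [eval_sub, eval_X, eval_C, sub_ne_zero]
    exact fun hcc => hj'.1 (hinj j hj'.2 i₀ hi₀ hcc.symm)
  have := hsingle ▸ hstep
  exact (mul_eq_zero.mp this).resolve_left hne

lemma c_inj (a₁ a₂ : ℂ) (h₁ : 0 < ‖a₁‖) (h₁₂ : ‖a₁‖ ≤ ‖a₂‖)
    (h₂ : ‖a₂‖ < 1)
    (hres : ∀ k l : ℕ, (k, l) ≠ (0, 0) → a₁ ^ k ≠ a₂ ^ l) :
    ∀ k l m j : ℕ, a₁ ^ k * a₂ ^ l = a₁ ^ m * a₂ ^ j → k = m ∧ l = j := by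
  have ha₁ : a₁ ≠ 0 := fun h => by simp [h] at h₁
  have ha₂ : a₂ ≠ 0 := fun h => by
    rw [h] at h₁₂; simp at h₁₂; exact ha₁ h₁₂
  have habs1 : ‖a₁‖ < 1 := lt_of_le_of_lt h₁₂ h₂
  -- modulus argument: a₁ ^ u * a₂ ^ v = 1 → u = 0 ∧ v = 0
  have hmod : ∀ u v : ℕ, a₁ ^ u * a₂ ^ v = 1 → u = 0 ∧ v = 0 := by
    intro u v huv
    by_contra hc
    have habs : ‖a₁ ^ u * a₂ ^ v‖ < 1 := by
      rw [norm_mul, norm_pow, norm_pow]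
      rcases Nat.eq_zero_or_pos u with hu | hu
      · have hv : 0 < v := by
          rcases Nat.eq_zero_or_pos v with hv | hv
          · exact absurd (by simp [hu, hv] : u = 0 ∧ v = 0) hc
          · exact hv
        calc ‖a₁‖ ^ u * ‖a₂‖ ^ v = ‖a₂‖ ^ v := by
              rw [hu]; ring
          _ < 1 := pow_lt_one₀ (norm_nonneg a₂) h₂ hv.ne'
      · have hle : ‖a₁‖ ^ u < 1 := pow_lt_one₀ (norm_nonneg a₁) habs1 hu.ne'
        have hle2 : ‖a₂‖ ^ v ≤ 1 := pow_le_one₀ (norm_nonneg a₂) h₂.le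
        calc ‖a₁‖ ^ u * ‖a₂‖ ^ v ≤ ‖a₁‖ ^ u * 1 := by
              apply mul_le_mul_of_nonneg_left hle2 (by positivity)
          _ < 1 := by rwa [mul_one]
    rw [huv] at habs
    simp at habs
  have cancel₁ : ∀ e : ℕ, ∀ x y : ℂ, a₁ ^ e * x = a₁ ^ e * y → x = y :=
    fun e x y h => mul_left_cancel₀ (pow_ne_zero e ha₁) h
  have cancel₂ : ∀ e : ℕ, ∀ x y : ℂ, a₂ ^ e * x = a₂ ^ e * y → x = y :=
    fun e x y h => mul_left_cancel₀ (pow_ne_zero e ha₂) h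
  intro k l m j hE
  rcases le_total m k with hmk | hkm
  · obtain ⟨d, rfl⟩ : ∃ d, k = m + d := ⟨k - m, (Nat.add_sub_cancel' hmk).symm⟩
    have hE1 : a₁ ^ d * a₂ ^ l = a₂ ^ j := by
      apply cancel₁ m
      rw [← mul_assoc, ← pow_add]
      linear_combination hE
    rcases le_total l j with hlj | hjl
    · obtain ⟨e, rfl⟩ : ∃ e, j = l + e := ⟨j - l, (Nat.add_sub_cancel' hlj).symm⟩
      have hE2 : a₁ ^ d = a₂ ^ e := by
        apply cancel₂ l
        rw [pow_add] at hE1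
        linear_combination hE1
      by_cases hde : (d, e) = (0, 0)
      · have : d = 0 ∧ e = 0 := ⟨congrArg Prod.fst hde, congrArg Prod.snd hde⟩
        omega
      · exact absurd hE2 (hres d e hde)
    · obtain ⟨e, rfl⟩ : ∃ e, l = j + e := ⟨l - j, (Nat.add_sub_cancel' hjl).symm⟩
      have hE2 : a₁ ^ d * a₂ ^ e = 1 := by
        apply cancel₂ j
        rw [pow_add] at hE1
        rw [mul_one]
        linear_combination hE1
      obtain ⟨rfl, rfl⟩ := hmod d e hE2
      omega
  · obtain ⟨d, rfl⟩ : ∃ d, m = k + d := ⟨m - k, (Nat.add_sub_cancel' hkm).symm⟩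
    have hE1 : a₂ ^ l = a₁ ^ d * a₂ ^ j := by
      apply cancel₁ k
      rw [← mul_assoc, ← pow_add] at *
      linear_combination hE
    rcases le_total j l with hjl | hlj
    · obtain ⟨e, rfl⟩ : ∃ e, l = j + e := ⟨l - j, (Nat.add_sub_cancel' hjl).symm⟩
      have hE2 : a₁ ^ d = a₂ ^ e := by
        symm
        apply cancel₂ j
        rw [pow_add] at hE1
        linear_combination hE1
      by_cases hde : (d, e) = (0, 0)
      · have : d = 0 ∧ e = 0 := ⟨congrArg Prod.fst hde, congrArg Prod.snd hde⟩
        omega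
      · exact absurd hE2 (hres d e hde)
    · obtain ⟨e, rfl⟩ : ∃ e, j = l + e := ⟨j - l, (Nat.add_sub_cancel' hlj).symm⟩
      have hE2 : a₁ ^ d * a₂ ^ e = 1 := by
        symm
        apply cancel₂ l
        rw [pow_add] at hE1
        rw [mul_one]
        linear_combination hE1
      obtain ⟨rfl, rfl⟩ := hmod d e hE2
      omega

/-- packaging into iterated power series -/
def T (F : ℂ × ℂ → ℂ) : PowerSeries (PowerSeries ℂ) :=
  PowerSeries.mk fun k => PowerSeries.mk fun l => co2 F k l

lemma T_coeff (F : ℂ × ℂ → ℂ) (k l : ℕ) :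
    PowerSeries.coeff l (PowerSeries.coeff k (T F)) = co2 F k l := by
  rw [T, PowerSeries.coeff_mk, PowerSeries.coeff_mk]

lemma T_mul {F G : ℂ × ℂ → ℂ} (hF : Differentiable ℂ F) (hG : Differentiable ℂ G) :
    T (fun zw => F zw * G zw) = T F * T G := by
  ext K L
  rw [PowerSeries.coeff_mul, map_sum, T_coeff _ K L, co2_mul hF hG]
  refine Finset.sum_congr rfl fun kl _ => ?_
  rw [PowerSeries.coeff_mul]
  exact Finset.sum_congr rfl fun lj _ => by rw [T_coeff, T_coeff]

lemma T_eq_zero_iff {F : ℂ × ℂ → ℂ} : T F = 0 ↔ ∀ k l, co2 F k l = 0 := by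
  constructor
  · intro h k l
    rw [← T_coeff F k l, h]
    simp
  · intro h
    ext K L
    rw [T_coeff]
    simp [h]

/-- Under the non-resonance condition, if `P`, `Q` are entire on `ℂ²`,
`Q` is not identically zero, and `P(a₁z₁,a₂z₂)·Q(z₁,z₂) = P(z₁,z₂)·Q(a₁z₁,a₂z₂)`,
then `P = λ·Q` for some constant `λ ∈ ℂ`. -/
theorem stmt_4 (a₁ a₂ : ℂ)
    (h₁ : 0 < ‖a₁‖) (h₁₂ : ‖a₁‖ ≤ ‖a₂‖)
    (h₂ : ‖a₂‖ < 1)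
    (hres : ∀ k l : ℕ, (k, l) ≠ (0, 0) → a₁ ^ k ≠ a₂ ^ l)
    (P Q : ℂ × ℂ → ℂ)
    (hPdiff : Differentiable ℂ P) (hQdiff : Differentiable ℂ Q)
    (hQne : ∃ z : ℂ × ℂ, Q z ≠ 0)
    (heq : ∀ z : ℂ × ℂ, P (a₁ * z.1, a₂ * z.2) * Q z = P z * Q (a₁ * z.1, a₂ * z.2)) :
    ∃ lam : ℂ, ∀ z : ℂ × ℂ, P z = lam * Q z := by
  classical
  have ha₁ : a₁ ≠ 0 := fun h => by simp [h] at h₁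
  have ha₂ : a₂ ≠ 0 := by
    intro h
    rw [h] at h₁₂
    simp only [norm_zero] at h₁₂
    exact absurd (lt_of_lt_of_le h₁ h₁₂) (lt_irrefl 0)
  by_cases hP0 : ∀ k l, co2 P k l = 0
  · exact ⟨0, fun z => by rw [co2_zero_all hPdiff hP0 z, zero_mul]⟩
  push_neg at hP0
  obtain ⟨k₁, l₁, hp₁⟩ := hP0
  have hq0 : ∃ k l, co2 Q k l ≠ 0 := by
    by_contra hq
    push_neg at hq
    obtain ⟨z, hz⟩ := hQne
    exact hz (co2_zero_all hQdiff hq z)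
  obtain ⟨k₀, l₀, hq₀⟩ := hq0
  -- rescaled functions
  have hPnd : ∀ n : ℕ, Differentiable ℂ (fun zw : ℂ × ℂ => P (a₁ ^ n * zw.1, a₂ ^ n * zw.2)) :=
    fun n => hPdiff.comp ((differentiable_fst.const_mul _).prodMk (differentiable_snd.const_mul _))
  have hQnd : ∀ n : ℕ, Differentiable ℂ (fun zw : ℂ × ℂ => Q (a₁ ^ n * zw.1, a₂ ^ n * zw.2)) :=
    fun n => hQdiff.comp ((differentiable_fst.const_mul _).prodMk (differentiable_snd.const_mul _))
  have heqn : ∀ n : ℕ, (fun zw : ℂ × ℂ => P (a₁ ^ (n+1) * zw.1, a₂ ^ (n+1) * zw.2) * Q (a₁ ^ n * zw.1, a₂ ^ n * zw.2))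
      = (fun zw : ℂ × ℂ => P (a₁ ^ n * zw.1, a₂ ^ n * zw.2) * Q (a₁ ^ (n+1) * zw.1, a₂ ^ (n+1) * zw.2)) := by
    intro n
    funext zw
    have h := heq (a₁ ^ n * zw.1, a₂ ^ n * zw.2)
    simp only at h
    rw [show a₁ * (a₁ ^ n * zw.1) = a₁ ^ (n+1) * zw.1 from by ring,
        show a₂ * (a₂ ^ n * zw.2) = a₂ ^ (n+1) * zw.2 from by ring] at h
    exact h
  have tPne : ∀ n : ℕ, T (fun zw : ℂ × ℂ => P (a₁ ^ n * zw.1, a₂ ^ n * zw.2)) ≠ 0 := by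
    intro n hTn
    have h := T_eq_zero_iff.mp hTn k₁ l₁
    rw [co2_scale hPdiff _ _ k₁ l₁] at h
    rcases mul_eq_zero.mp h with h' | h'
    · exact absurd h' (mul_ne_zero (pow_ne_zero _ (pow_ne_zero _ ha₁)) (pow_ne_zero _ (pow_ne_zero _ ha₂)))
    · exact hp₁ h'
  have claim : ∀ n : ℕ,
      T (fun zw : ℂ × ℂ => P (a₁ ^ n * zw.1, a₂ ^ n * zw.2)) * T (fun zw : ℂ × ℂ => Q (a₁ ^ 0 * zw.1, a₂ ^ 0 * zw.2))
      = T (fun zw : ℂ × ℂ => P (a₁ ^ 0 * zw.1, a₂ ^ 0 * zw.2)) * T (fun zw : ℂ × ℂ => Q (a₁ ^ n * zw.1, a₂ ^ n * zw.2)) := by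
    intro n
    induction n with
    | zero => rfl
    | succ n ih =>
      have h1 : T (fun zw : ℂ × ℂ => P (a₁ ^ (n+1) * zw.1, a₂ ^ (n+1) * zw.2)) * T (fun zw : ℂ × ℂ => Q (a₁ ^ n * zw.1, a₂ ^ n * zw.2))
          = T (fun zw : ℂ × ℂ => P (a₁ ^ n * zw.1, a₂ ^ n * zw.2)) * T (fun zw : ℂ × ℂ => Q (a₁ ^ (n+1) * zw.1, a₂ ^ (n+1) * zw.2)) := by
        rw [← T_mul (hPnd (n+1)) (hQnd n), ← T_mul (hPnd n) (hQnd (n+1)), heqn n]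
      apply mul_left_cancel₀ (tPne n)
      linear_combination (T (fun zw : ℂ × ℂ => P (a₁ ^ (n+1) * zw.1, a₂ ^ (n+1) * zw.2))) * ih
        + (T (fun zw : ℂ × ℂ => P (a₁ ^ 0 * zw.1, a₂ ^ 0 * zw.2))) * h1
  -- coefficient-level consequence
  have claim' : ∀ n K L : ℕ,
      co2 (fun zw : ℂ × ℂ => (fun zw : ℂ × ℂ => P (a₁ ^ n * zw.1, a₂ ^ n * zw.2)) zw * (fun zw : ℂ × ℂ => Q (a₁ ^ 0 * zw.1, a₂ ^ 0 * zw.2)) zw) K L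
      = co2 (fun zw : ℂ × ℂ => (fun zw : ℂ × ℂ => P (a₁ ^ 0 * zw.1, a₂ ^ 0 * zw.2)) zw * (fun zw : ℂ × ℂ => Q (a₁ ^ n * zw.1, a₂ ^ n * zw.2)) zw) K L := by
    intro n K L
    have h := claim n
    rw [← T_mul (hPnd n) (hQnd 0), ← T_mul (hPnd 0) (hQnd n)] at h
    rw [← T_coeff _ K L, h, T_coeff]
  have key : ∀ n K L : ℕ,
      ∑ kl ∈ Finset.HasAntidiagonal.antidiagonal K, ∑ lj ∈ Finset.HasAntidiagonal.antidiagonal L,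
        (a₁ ^ kl.1 * a₂ ^ lj.1) ^ n * (co2 P kl.1 lj.1 * co2 Q kl.2 lj.2)
      = ∑ kl ∈ Finset.HasAntidiagonal.antidiagonal K, ∑ lj ∈ Finset.HasAntidiagonal.antidiagonal L,
        (a₁ ^ kl.2 * a₂ ^ lj.2) ^ n * (co2 P kl.1 lj.1 * co2 Q kl.2 lj.2) := by
    intro n K L
    have h := claim' n K L
    rw [co2_mul (hPnd n) (hQnd 0), co2_mul (hPnd 0) (hQnd n)] at h
    calc ∑ kl ∈ Finset.HasAntidiagonal.antidiagonal K, ∑ lj ∈ Finset.HasAntidiagonal.antidiagonal L,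
          (a₁ ^ kl.1 * a₂ ^ lj.1) ^ n * (co2 P kl.1 lj.1 * co2 Q kl.2 lj.2)
        = ∑ kl ∈ Finset.HasAntidiagonal.antidiagonal K, ∑ lj ∈ Finset.HasAntidiagonal.antidiagonal L,
          co2 (fun zw : ℂ × ℂ => P (a₁ ^ n * zw.1, a₂ ^ n * zw.2)) kl.1 lj.1
            * co2 (fun zw : ℂ × ℂ => Q (a₁ ^ 0 * zw.1, a₂ ^ 0 * zw.2)) kl.2 lj.2 := by
          refine Finset.sum_congr rfl fun kl _ => Finset.sum_congr rfl fun lj _ => ?_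
          rw [co2_scale hPdiff, co2_scale hQdiff]
          simp only [pow_zero, one_pow, one_mul]
          ring
      _ = ∑ kl ∈ Finset.HasAntidiagonal.antidiagonal K, ∑ lj ∈ Finset.HasAntidiagonal.antidiagonal L,
          co2 (fun zw : ℂ × ℂ => P (a₁ ^ 0 * zw.1, a₂ ^ 0 * zw.2)) kl.1 lj.1
            * co2 (fun zw : ℂ × ℂ => Q (a₁ ^ n * zw.1, a₂ ^ n * zw.2)) kl.2 lj.2 := h
      _ = ∑ kl ∈ Finset.HasAntidiagonal.antidiagonal K, ∑ lj ∈ Finset.HasAntidiagonal.antidiagonal L,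
          (a₁ ^ kl.2 * a₂ ^ lj.2) ^ n * (co2 P kl.1 lj.1 * co2 Q kl.2 lj.2) := by
          refine Finset.sum_congr rfl fun kl _ => Finset.sum_congr rfl fun lj _ => ?_
          rw [co2_scale hPdiff, co2_scale hQdiff]
          simp only [pow_zero, one_pow, one_mul]
          ring
  -- reflection helper
  have reflect : ∀ (K L : ℕ) (g : ℕ → ℕ → ℂ),
      ∑ k ∈ Finset.range (K+1), ∑ l ∈ Finset.range (L+1), g (K - k) (L - l)
        = ∑ k ∈ Finset.range (K+1), ∑ l ∈ Finset.range (L+1), g k l := by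
    intro K L g
    have h1 : ∀ m : ℕ, ∑ l ∈ Finset.range (L+1), g m (L - l) = ∑ l ∈ Finset.range (L+1), g m l := by
      intro m
      have := Finset.sum_range_reflect (fun l => g m l) (L+1)
      simpa using this
    calc ∑ k ∈ Finset.range (K+1), ∑ l ∈ Finset.range (L+1), g (K - k) (L - l)
        = ∑ k ∈ Finset.range (K+1), ∑ l ∈ Finset.range (L+1), g (K - k) l :=
          Finset.sum_congr rfl fun k _ => h1 (K - k)
      _ = ∑ k ∈ Finset.range (K+1), ∑ l ∈ Finset.range (L+1), g k l := by
          have := Finset.sum_range_reflect (fun k => ∑ l ∈ Finset.range (L+1), g k l) (K+1)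
          simpa using this
  -- proportionality of coefficients
  have hprop : ∀ k l m j : ℕ, co2 P k l * co2 Q m j = co2 P m j * co2 Q k l := by
    intro k l m j
    have hvan : ∀ i ∈ Finset.range (k+m+1) ×ˢ Finset.range (l+j+1),
        (fun i : ℕ × ℕ => co2 P i.1 i.2 * co2 Q (k+m - i.1) (l+j - i.2)
          - co2 P (k+m - i.1) (l+j - i.2) * co2 Q i.1 i.2) i = 0 := by
      apply vandermonde_zero _ (fun i : ℕ × ℕ => a₁ ^ i.1 * a₂ ^ i.2)
      · intro i _ j' _ hij
        have := c_inj a₁ a₂ h₁ h₁₂ h₂ hres i.1 i.2 j'.1 j'.2 hij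
        exact Prod.ext this.1 this.2
      · intro n
        have h := key n (k+m) (l+j)
        simp only [Finset.Nat.sum_antidiagonal_eq_sum_range_succ_mk] at h
        rw [Finset.sum_product]
        simp only [mul_sub, Finset.sum_sub_distrib]
        rw [sub_eq_zero]
        calc ∑ u ∈ Finset.range (k+m+1), ∑ v ∈ Finset.range (l+j+1),
              (a₁ ^ u * a₂ ^ v) ^ n * (co2 P u v * co2 Q (k+m-u) (l+j-v)) = _ := h
          _ = ∑ u ∈ Finset.range (k+m+1), ∑ v ∈ Finset.range (l+j+1),
              (a₁ ^ u * a₂ ^ v) ^ n * (co2 P (k+m-u) (l+j-v) * co2 Q u v) := by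
            rw [← reflect (k+m) (l+j) (fun u v =>
              (a₁ ^ (k+m-u) * a₂ ^ (l+j-v)) ^ n * (co2 P u v * co2 Q (k+m-u) (l+j-v)))]
            refine Finset.sum_congr rfl fun u hu => Finset.sum_congr rfl fun v hv => ?_
            have hu' : u ≤ k + m := Nat.lt_succ_iff.mp (Finset.mem_range.mp hu)
            have hv' : v ≤ l + j := Nat.lt_succ_iff.mp (Finset.mem_range.mp hv)
            rw [Nat.sub_sub_self hu', Nat.sub_sub_self hv']
    have := hvan (k, l) (by
      refine Finset.mem_product.mpr ⟨Finset.mem_range.mpr ?_, Finset.mem_range.mpr ?_⟩ <;> omega)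
    simp only [Nat.add_sub_cancel_left] at this
    linear_combination this
  -- conclusion
  refine ⟨co2 P k₀ l₀ / co2 Q k₀ l₀, fun z => ?_⟩
  have hall : ∀ k l, co2 (fun zw : ℂ × ℂ => P zw - (co2 P k₀ l₀ / co2 Q k₀ l₀) * Q zw) k l = 0 := by
    intro k l
    rw [co2_sub_smul hPdiff hQdiff]
    have h := hprop k l k₀ l₀
    field_simp
    linear_combination h
  have hz := co2_zero_all (hPdiff.sub (hQdiff.const_mul _)) hall z
  exact sub_eq_zero.mp hz

end StmtAux
end

section
/- Let a₁, a₂ be complex numbers with 0 < |a₁| ≤ |a₂| < 1. Let f : ℂ × ℂ → ℂ be holomorphic on ℂ² ∖ {(0,0)} (complex differentiable at every point of the complement of the origin) and suppose f(a₁ z₁, a₂ z₂) = f(z₁, z₂) for all (z₁, z₂) ≠ (0,0). Then f is constant on ℂ² ∖ {(0,0)}: f(z) = f(w) for all z, w ∈ ℂ² ∖ {(0,0)}. -/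
/-- A function holomorphic on `ℂ² ∖ {(0,0)}` which is invariant under
`(z₁,z₂) ↦ (a₁z₁, a₂z₂)` (with `0 < |a₁| ≤ |a₂| < 1`) is constant there. -/
theorem stmt_5 (a₁ a₂ : ℂ)
    (h₁ : 0 < ‖a₁‖) (h₁₂ : ‖a₁‖ ≤ ‖a₂‖)
    (h₂ : ‖a₂‖ < 1)
    (f : ℂ × ℂ → ℂ)
    (hf : DifferentiableOn ℂ f {z : ℂ × ℂ | z ≠ 0})
    (hinv : ∀ z : ℂ × ℂ, z ≠ 0 → f (a₁ * z.1, a₂ * z.2) = f z) :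
    ∀ z w : ℂ × ℂ, z ≠ 0 → w ≠ 0 → f z = f w := by
  have ha₁ : a₁ ≠ 0 := by
    intro h; simp [h] at h₁
  have hr₂pos : 0 < ‖a₂‖ := lt_of_lt_of_le h₁ h₁₂
  have ha₂ : a₂ ≠ 0 := by
    intro h; simp [h] at hr₂pos
  set r₁ : ℝ := ‖a₁‖ with hr₁def
  set r₂ : ℝ := ‖a₂‖ with hr₂def
  have hr₁pos : 0 < r₁ := h₁
  -- differentiability at each nonzero point
  have fA : ∀ u : ℂ × ℂ, u ≠ 0 → DifferentiableAt ℂ f u := fun u hu =>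
    hf.differentiableAt (isOpen_ne.mem_nhds hu)
  -- norm facts for the contraction T z = (a₁ z₁, a₂ z₂)
  have key_le : ∀ z : ℂ × ℂ, ‖((a₁ * z.1, a₂ * z.2) : ℂ × ℂ)‖ ≤ r₂ * ‖z‖ := by
    intro z
    rw [Prod.norm_def, Prod.norm_def, norm_mul, norm_mul,
      ← hr₁def, ← hr₂def]
    apply max_le
    · calc r₁ * ‖z.1‖ ≤ r₂ * ‖z.1‖ := by gcongr
        _ ≤ r₂ * max ‖z.1‖ ‖z.2‖ := by gcongr; exact le_max_left _ _
    · gcongr; exact le_max_right _ _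
  have key_ge : ∀ z : ℂ × ℂ, r₁ * ‖z‖ ≤ ‖((a₁ * z.1, a₂ * z.2) : ℂ × ℂ)‖ := by
    intro z
    rw [Prod.norm_def, Prod.norm_def, norm_mul, norm_mul,
      ← hr₁def, ← hr₂def]
    rw [mul_max_of_nonneg _ _ hr₁pos.le]
    apply max_le
    · exact le_max_left _ _
    · exact le_trans (by gcongr) (le_max_right (r₁ * ‖z.1‖) (r₂ * ‖z.2‖))
  -- T maps nonzero to nonzero
  have hTne : ∀ z : ℂ × ℂ, z ≠ 0 → ((a₁ * z.1, a₂ * z.2) : ℂ × ℂ) ≠ 0 := by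
    intro z hz h
    rw [Prod.ext_iff] at h
    simp only [Prod.fst_zero, Prod.snd_zero, mul_eq_zero] at h
    apply hz
    rw [Prod.ext_iff]
    exact ⟨h.1.resolve_left ha₁, h.2.resolve_left ha₂⟩
  -- inverse map S
  have hSne : ∀ z : ℂ × ℂ, z ≠ 0 → ((z.1 / a₁, z.2 / a₂) : ℂ × ℂ) ≠ 0 := by
    intro z hz h
    rw [Prod.ext_iff] at h
    simp only [Prod.fst_zero, Prod.snd_zero, div_eq_zero_iff] at h
    apply hz
    rw [Prod.ext_iff]
    exact ⟨h.1.resolve_right ha₁, h.2.resolve_right ha₂⟩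
  have hTS : ∀ z : ℂ × ℂ, ((a₁ * (z.1 / a₁), a₂ * (z.2 / a₂)) : ℂ × ℂ) = z := by
    intro z
    rw [Prod.ext_iff]
    constructor <;> · simp; field_simp
  have hSinv : ∀ z : ℂ × ℂ, z ≠ 0 → f ((z.1 / a₁, z.2 / a₂) : ℂ × ℂ) = f z := by
    intro z hz
    have := hinv ((z.1 / a₁, z.2 / a₂) : ℂ × ℂ) (hSne z hz)
    rw [show ((a₁ * (z.1 / a₁, z.2 / a₂).1, a₂ * (z.1 / a₁, z.2 / a₂).2) : ℂ × ℂ) = z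
      from hTS z] at this
    exact this.symm
  have hS_le : ∀ z : ℂ × ℂ, ‖((z.1 / a₁, z.2 / a₂) : ℂ × ℂ)‖ ≤ ‖z‖ / r₁ := by
    intro z
    have := key_ge ((z.1 / a₁, z.2 / a₂) : ℂ × ℂ)
    rw [hTS z] at this
    rw [le_div_iff₀ hr₁pos]
    linarith
  have hS_ge : ∀ z : ℂ × ℂ, ‖z‖ / r₂ ≤ ‖((z.1 / a₁, z.2 / a₂) : ℂ × ℂ)‖ := by
    intro z
    have := key_le ((z.1 / a₁, z.2 / a₂) : ℂ × ℂ)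
    rw [hTS z] at this
    rw [div_le_iff₀ hr₂pos]
    linarith
  -- the compact fundamental region
  set K : Set (ℂ × ℂ) := {u : ℂ × ℂ | r₁ ≤ ‖u‖ ∧ ‖u‖ ≤ 1} with hKdef
  have hKsub : K ⊆ {z : ℂ × ℂ | z ≠ 0} := by
    intro u hu h0
    rw [hKdef] at hu
    have := hu.1
    rw [h0] at this
    simp at this
    linarith
  have hKcpt : IsCompact K := by
    have h1 : IsClosed K := by
      apply IsClosed.inter
      · exact isClosed_le continuous_const continuous_norm
      · exact isClosed_le continuous_norm continuous_const
    exact (isCompact_closedBall (0 : ℂ × ℂ) 1).of_isClosed_subset h1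
      (fun u hu => by simpa [Metric.mem_closedBall, dist_zero_right] using hu.2)
  obtain ⟨M, hM⟩ : ∃ M : ℝ, ∀ u ∈ K, ‖f u‖ ≤ M :=
    hKcpt.exists_bound_of_continuousOn (hf.continuousOn.mono hKsub)
  -- bring any point into the unit ball
  have hC : ∀ n : ℕ, ∀ z : ℂ × ℂ, z ≠ 0 → ‖z‖ * r₂ ^ n ≤ 1 →
      ∃ u : ℂ × ℂ, u ≠ 0 ∧ ‖u‖ ≤ 1 ∧ f u = f z := by
    intro n
    induction n with
    | zero => intro z hz h; exact ⟨z, hz, by simpa using h, rfl⟩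
    | succ n ih =>
      intro z hz h
      by_cases h1 : ‖z‖ ≤ 1
      · exact ⟨z, hz, h1, rfl⟩
      · have hb : ‖((a₁ * z.1, a₂ * z.2) : ℂ × ℂ)‖ * r₂ ^ n ≤ 1 := by
          have := key_le z
          have hp : (0:ℝ) ≤ r₂ ^ n := pow_nonneg hr₂pos.le n
          calc ‖((a₁ * z.1, a₂ * z.2) : ℂ × ℂ)‖ * r₂ ^ n ≤ (r₂ * ‖z‖) * r₂ ^ n := by gcongr
            _ = ‖z‖ * r₂ ^ (n + 1) := by ring
            _ ≤ 1 := h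
        obtain ⟨u, hu0, hu1, hu2⟩ := ih ((a₁ * z.1, a₂ * z.2) : ℂ × ℂ) (hTne z hz) hb
        exact ⟨u, hu0, hu1, hu2.trans (hinv z hz)⟩
  -- lift any small point into K
  have hD : ∀ n : ℕ, ∀ z : ℂ × ℂ, z ≠ 0 → ‖z‖ ≤ 1 → r₁ * r₂ ^ n ≤ ‖z‖ →
      ∃ u ∈ K, f u = f z := by
    intro n
    induction n with
    | zero =>
      intro z hz h1 h2
      exact ⟨z, ⟨by simpa using h2, h1⟩, rfl⟩
    | succ n ih =>
      intro z hz h1 h2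
      by_cases hr : r₁ ≤ ‖z‖
      · exact ⟨z, ⟨hr, h1⟩, rfl⟩
      · push_neg at hr
        have hz' := hSne z hz
        have hle : ‖((z.1 / a₁, z.2 / a₂) : ℂ × ℂ)‖ ≤ 1 := by
          have := hS_le z
          have : ‖((z.1 / a₁, z.2 / a₂) : ℂ × ℂ)‖ ≤ ‖z‖ / r₁ := this
          have h' : ‖z‖ / r₁ ≤ 1 := by
            rw [div_le_one hr₁pos]; linarith
          linarith
        have hge : r₁ * r₂ ^ n ≤ ‖((z.1 / a₁, z.2 / a₂) : ℂ × ℂ)‖ := by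
          have := hS_ge z
          have h' : r₁ * r₂ ^ n ≤ ‖z‖ / r₂ := by
            rw [le_div_iff₀ hr₂pos]
            calc r₁ * r₂ ^ n * r₂ = r₁ * r₂ ^ (n + 1) := by ring
              _ ≤ ‖z‖ := h2
          linarith
        obtain ⟨u, huK, hu⟩ := ih ((z.1 / a₁, z.2 / a₂) : ℂ × ℂ) hz' hle hge
        exact ⟨u, huK, hu.trans (hSinv z hz)⟩
  -- global bound
  have hbd : ∀ v : ℂ × ℂ, v ≠ 0 → ‖f v‖ ≤ M := by
    intro v hv
    have hvpos : (0:ℝ) < ‖v‖ := norm_pos_iff.mpr hv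
    obtain ⟨n, hn⟩ : ∃ n : ℕ, r₂ ^ n < ‖v‖⁻¹ :=
      exists_pow_lt_of_lt_one (by positivity) h₂
    have hn' : ‖v‖ * r₂ ^ n ≤ 1 := by
      have := mul_lt_mul_of_pos_left hn hvpos
      rw [mul_inv_cancel₀ hvpos.ne'] at this
      linarith
    obtain ⟨u1, hu1ne, hu1le, hu1f⟩ := hC n v hv hn'
    have hu1pos : (0:ℝ) < ‖u1‖ := norm_pos_iff.mpr hu1ne
    obtain ⟨m, hm⟩ : ∃ m : ℕ, r₂ ^ m < ‖u1‖ / r₁ :=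
      exists_pow_lt_of_lt_one (by positivity) h₂
    have hm' : r₁ * r₂ ^ m ≤ ‖u1‖ := by
      rw [lt_div_iff₀ hr₁pos] at hm
      nlinarith
    obtain ⟨u2, hu2K, hu2f⟩ := hD m u1 hu1ne hu1le hm'
    calc ‖f v‖ = ‖f u2‖ := by rw [hu2f, hu1f]
      _ ≤ M := hM u2 hu2K
  -- constancy along complex lines avoiding the origin
  have hline : ∀ z w : ℂ × ℂ, z ≠ 0 → w ≠ 0 →
      (∀ t : ℂ, z + t • (w - z) ≠ 0) → f z = f w := by
    intro z w hz hw hl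
    set g : ℂ → ℂ := fun t => f (z + t • (w - z)) with hg
    have hgd : Differentiable ℂ g := by
      intro t
      apply DifferentiableAt.comp
      · exact fA _ (hl t)
      · exact (differentiable_id.smul_const (w - z)).const_add z |>.differentiableAt
    have hgb : Bornology.IsBounded (Set.range g) := by
      rw [isBounded_iff_forall_norm_le]
      exact ⟨M, by rintro x ⟨t, rfl⟩; exact hbd _ (hl t)⟩
    have := hgd.apply_eq_apply_of_bounded hgb 0 1
    simpa [hg] using this
  -- the line between "independent" points avoids 0
  have hindep : ∀ z w : ℂ × ℂ, w ≠ 0 → z.1 * w.2 - z.2 * w.1 ≠ 0 →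
      ∀ t : ℂ, z + t • (w - z) ≠ 0 := by
    intro z w hw hdet t ht
    rw [Prod.ext_iff] at ht
    simp only [Prod.fst_add, Prod.snd_add, Prod.smul_fst, Prod.smul_snd, Prod.fst_sub,
      Prod.snd_sub, smul_eq_mul, Prod.fst_zero, Prod.snd_zero] at ht
    obtain ⟨h1, h2⟩ := ht
    have hd1 : (1 - t) * (z.1 * w.2 - z.2 * w.1) = 0 := by
      linear_combination w.2 * h1 - w.1 * h2
    have ht1 : t = 1 := by
      rcases mul_eq_zero.mp hd1 with h | h
      · linear_combination -h
      · exact absurd h hdet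
    apply hw
    rw [Prod.ext_iff]
    constructor
    · have := h1; rw [ht1] at this; simpa using by linear_combination this
    · have := h2; rw [ht1] at this; simpa using by linear_combination this
  have key : ∀ z w : ℂ × ℂ, z ≠ 0 → w ≠ 0 → z.1 * w.2 - z.2 * w.1 ≠ 0 → f z = f w := by
    intro z w hz hw hdet
    exact hline z w hz hw (hindep z w hw hdet)
  -- final assembly
  intro z w hz hw
  by_cases hdet : z.1 * w.2 - z.2 * w.1 ≠ 0
  · exact key z w hz hw hdet
  · push_neg at hdet
    set u : ℂ × ℂ := (-(starRingEnd ℂ) z.2, (starRingEnd ℂ) z.1) with hu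
    have hzsq : z.1 * (starRingEnd ℂ) z.1 + z.2 * (starRingEnd ℂ) z.2 ≠ 0 := by
      rw [Complex.mul_conj, Complex.mul_conj]
      rw [← Complex.ofReal_add]
      rw [Ne, Complex.ofReal_eq_zero]
      have : Complex.normSq z.1 + Complex.normSq z.2 ≠ 0 := by
        intro h
        apply hz
        have h1 : Complex.normSq z.1 = 0 ∧ Complex.normSq z.2 = 0 := by
          constructor <;> nlinarith [Complex.normSq_nonneg z.1, Complex.normSq_nonneg z.2]
        rw [Prod.ext_iff]
        exact ⟨Complex.normSq_eq_zero.mp h1.1, Complex.normSq_eq_zero.mp h1.2⟩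
      exact this
    have hune : u ≠ 0 := by
      intro h
      rw [hu, Prod.ext_iff] at h
      simp only [Prod.fst_zero, Prod.snd_zero, neg_eq_zero, map_eq_zero] at h
      apply hz
      rw [Prod.ext_iff]
      exact ⟨h.2, h.1⟩
    have hdzu : z.1 * u.2 - z.2 * u.1 ≠ 0 := by
      rw [hu]
      simpa using by
        intro h
        apply hzsq
        linear_combination h
    have hdwu : w.1 * u.2 - w.2 * u.1 ≠ 0 := by
      rw [hu]
      simp only [neg_neg]
      intro h
      -- h : w.1 * conj z.1 + w.2 * conj z.2 = 0 (up to form)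
      apply hw
      rw [Prod.ext_iff]
      have hw1 : w.1 * (z.1 * (starRingEnd ℂ) z.1 + z.2 * (starRingEnd ℂ) z.2) = 0 := by
        linear_combination z.1 * h - ((starRingEnd ℂ) z.2) * hdet
      have hw2 : w.2 * (z.1 * (starRingEnd ℂ) z.1 + z.2 * (starRingEnd ℂ) z.2) = 0 := by
        linear_combination z.2 * h + ((starRingEnd ℂ) z.1) * hdet
      constructor
      · rcases mul_eq_zero.mp hw1 with h' | h'
        · exact h'
        · exact absurd h' hzsq
      · rcases mul_eq_zero.mp hw2 with h' | h'
        · exact h'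
        · exact absurd h' hzsq
    calc f z = f u := key z u hz hune hdzu
      _ = f w := (key w u hw hune hdwu).symm
end

section
/- Let a₁, a₂ be complex numbers with 0 < |a₁| ≤ |a₂| < 1 such that a₁^k ≠ a₂^l for every pair of natural numbers (k, l) ≠ (0, 0). Let f : ℂ × ℂ → ℂ be holomorphic on the open set {(z₁, z₂) ∈ ℂ² : z₁ ≠ 0} and suppose f(a₁ z₁, a₂ z₂) = f(z₁, z₂) for all (z₁, z₂) with z₁ ≠ 0. Then f is constant on {z₁ ≠ 0}: f(z) = f(w) for all z, w in this set. -/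
open Complex Metric Set Filter MeasureTheory intervalIntegral Topology

namespace Stmt6Aux

lemma isOpen_D : IsOpen {z : ℂ × ℂ | z.1 ≠ 0} :=
  isOpen_ne.preimage continuous_fst

lemma slice2 {f : ℂ × ℂ → ℂ} (hf : DifferentiableOn ℂ f {z : ℂ × ℂ | z.1 ≠ 0})
    {u : ℂ} (hu : u ≠ 0) : Differentiable ℂ (fun v => f (u, v)) := by
  intro v
  have h1 : DifferentiableAt ℂ f (u, v) :=
    hf.differentiableAt (isOpen_D.mem_nhds (by simpa using hu))
  exact h1.comp v ((differentiableAt_const u).prodMk differentiableAt_id)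

lemma slice1 {f : ℂ × ℂ → ℂ} (hf : DifferentiableOn ℂ f {z : ℂ × ℂ | z.1 ≠ 0})
    (w : ℂ) {x : ℂ} (hx : x ≠ 0) : DifferentiableAt ℂ (fun y => f (y, w)) x := by
  have h1 : DifferentiableAt ℂ f (x, w) :=
    hf.differentiableAt (isOpen_D.mem_nhds (by simpa using hx))
  exact h1.comp x (differentiableAt_id.prodMk (differentiableAt_const w))

lemma param_diff {f : ℂ × ℂ → ℂ} (hf : DifferentiableOn ℂ f {z : ℂ × ℂ | z.1 ≠ 0})
    (l : ℕ) {u₀ : ℂ} (hu₀ : u₀ ≠ 0) :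
    DifferentiableAt ℂ (fun u => ∮ z in C(0, (1:ℝ)), (1/z) ^ l • z⁻¹ • f (u, z)) u₀ := by
  set w : ℝ → ℂ := circleMap 0 1 with hw
  have hw_ne : ∀ θ, w θ ≠ 0 := fun θ => circleMap_ne_center one_ne_zero
  have hw_cont : Continuous w := continuous_circleMap 0 1
  set k : ℝ → ℂ := fun θ => deriv (circleMap 0 1) θ * ((1/w θ) ^ l * (w θ)⁻¹) with hk
  have hwabs : ∀ θ, ‖w θ‖ = 1 := by
    intro θ; simp [hw, norm_circleMap_zero]
  have hk_cont : Continuous k := by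
    have h1 : k = fun θ => (circleMap 0 1 θ * I) * ((1/w θ) ^ l * (w θ)⁻¹) := by
      funext θ; simp [hk, deriv_circleMap]
    rw [h1]
    exact ((continuous_circleMap 0 1).mul continuous_const).mul
      (((continuous_const.div hw_cont hw_ne).pow l).mul (hw_cont.inv₀ hw_ne))
  have hk_norm : ∀ θ, ‖k θ‖ ≤ 1 := by
    intro θ
    have : ‖k θ‖ = 1 := by
      simp only [hk, norm_mul, norm_pow, norm_inv, norm_div,
        deriv_circleMap, map_mul, norm_circleMap_zero, Complex.norm_I, abs_one, hwabs]
      norm_num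
    exact this.le
  set F : ℂ → ℝ → ℂ := fun x θ => k θ * f (x, w θ) with hF
  set F' : ℂ → ℝ → ℂ := fun x θ => k θ * deriv (fun y => f (y, w θ)) x with hF'
  set r₀ : ℝ := ‖u₀‖ with hr₀def
  have hr₀ : 0 < r₀ := by simpa [hr₀def] using hu₀
  -- points near u₀ are nonzero
  have hne : ∀ x : ℂ, ‖x - u₀‖ ≤ r₀ / 2 → x ≠ 0 := by
    intro x hx h0
    rw [h0, zero_sub, norm_neg] at hx
    linarith
  -- bound on f on a compact set
  obtain ⟨M, hM⟩ : ∃ M, ∀ p ∈ (closedBall u₀ (r₀/2)) ×ˢ (sphere (0:ℂ) 1), ‖f p‖ ≤ M := by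
    apply IsCompact.exists_bound_of_continuousOn
      ((isCompact_closedBall _ _).prod (isCompact_sphere _ _))
    apply hf.continuousOn.mono
    rintro ⟨y, z⟩ ⟨hy, hz⟩
    exact hne y (by simpa [Metric.mem_closedBall, Complex.dist_eq] using hy)
  have key := intervalIntegral.hasDerivAt_integral_of_dominated_loc_of_deriv_le
    (F := F) (F' := F') (x₀ := u₀) (a := 0) (b := 2 * Real.pi)
    (μ := MeasureTheory.volume) (bound := fun _ => M / (r₀/8))
    (s := ball u₀ (r₀/4)) (ball_mem_nhds u₀ (by positivity))
    ?hFmeas ?hFint ?hF'meas ?hbound ?hbi ?hdiff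
  · -- conclude
    have heq : (fun u => ∮ z in C(0, (1:ℝ)), (1/z) ^ l • z⁻¹ • f (u, z))
        = fun u => ∫ θ in (0:ℝ)..2 * Real.pi, F u θ := by
      funext x
      simp only [circleIntegral, smul_eq_mul, hF, hk, hw]
      apply intervalIntegral.integral_congr
      intro θ _
      ring
    rw [heq]
    exact key.2.differentiableAt
  case hFmeas =>
    filter_upwards [Metric.ball_mem_nhds u₀ (by positivity : (0:ℝ) < r₀/4)] with x hx
    have hx0 : x ≠ 0 := hne x (by
      have := mem_ball_iff_norm.mp hx
      linarith)
    have : Continuous (fun θ => F x θ) := by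
      apply hk_cont.mul
      exact hf.continuousOn.comp_continuous
        (continuous_const.prodMk hw_cont) (fun θ => by simpa using hx0)
    exact this.aestronglyMeasurable
  case hFint =>
    have : Continuous (fun θ => F u₀ θ) := by
      apply hk_cont.mul
      exact hf.continuousOn.comp_continuous
        (continuous_const.prodMk hw_cont) (fun θ => by simpa using hu₀)
    exact this.intervalIntegrable _ _
  case hF'meas =>
    -- difference quotients
    set δ : ℕ → ℝ := fun n => r₀ / (n + 2) with hδ
    have hδpos : ∀ n, 0 < δ n := by intro n; positivity
    have hδle : ∀ n, δ n ≤ r₀ / 2 := by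
      intro n
      apply div_le_div_of_nonneg_left hr₀.le (by norm_num)
      push_cast; linarith [Nat.cast_nonneg (α := ℝ) n]
    have hδ0 : Filter.Tendsto δ atTop (𝓝 0) := by
      apply Tendsto.div_atTop (tendsto_const_nhds)
      exact tendsto_atTop_add_const_right _ 2 tendsto_natCast_atTop_atTop
    have hne' : ∀ n, u₀ + (δ n : ℂ) ≠ 0 := by
      intro n
      apply hne
      have : ‖(δ n : ℂ)‖ = δ n := by
        rw [Complex.norm_real, Real.norm_eq_abs, abs_of_pos (hδpos n)]
      simp only [add_sub_cancel_left]
      rw [this]; exact hδle n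
    have hmeas : AEStronglyMeasurable
        (fun θ => deriv (fun y => f (y, w θ)) u₀)
        (MeasureTheory.volume.restrict (Set.uIoc 0 (2 * Real.pi))) := by
      apply aestronglyMeasurable_of_tendsto_ae (u := atTop)
        (f := fun n θ => (f (u₀ + (δ n : ℂ), w θ) - f (u₀, w θ)) / ((δ n : ℂ)))
      · intro n
        have hc : Continuous (fun θ => (f (u₀ + (δ n : ℂ), w θ) - f (u₀, w θ)) / ((δ n : ℂ))) := by
          apply Continuous.div_const
          apply Continuous.sub
          · exact hf.continuousOn.comp_continuous
              (continuous_const.prodMk hw_cont) (fun θ => by simpa using hne' n)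
          · exact hf.continuousOn.comp_continuous
              (continuous_const.prodMk hw_cont) (fun θ => by simpa using hu₀)
        exact hc.aestronglyMeasurable
      · apply MeasureTheory.ae_of_all
        intro θ
        have hd : HasDerivAt (fun y => f (y, w θ)) (deriv (fun y => f (y, w θ)) u₀) u₀ :=
          (slice1 hf (w θ) hu₀).hasDerivAt
        have hslope := hasDerivAt_iff_tendsto_slope.mp hd
        have hseq : Filter.Tendsto (fun n => u₀ + (δ n : ℂ)) atTop (𝓝[≠] u₀) := by
          apply tendsto_nhdsWithin_of_tendsto_nhds_of_eventually_within
          · have : Filter.Tendsto (fun n => (δ n : ℂ)) atTop (𝓝 0) := by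
              rw [show ((0:ℂ)) = ((0:ℝ):ℂ) by norm_num]
              exact (Complex.continuous_ofReal.tendsto 0).comp hδ0
            have h2 := this.const_add u₀
            simpa using h2
          · apply Filter.Eventually.of_forall
            intro n
            simp only [Set.mem_compl_iff, Set.mem_singleton_iff]
            intro h
            have : (δ n : ℂ) = 0 := by linear_combination h
            exact (hδpos n).ne' (by exact_mod_cast this)
        have := hslope.comp hseq
        convert this using 2 with n
        simp only [Function.comp_apply, slope_def_field]
        rw [add_sub_cancel_left]
    exact (hk_cont.aestronglyMeasurable.restrict).mul hmeas
  case hbound =>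
    apply MeasureTheory.ae_of_all
    intro θ _ x hx
    have hx' : ‖x - u₀‖ < r₀/4 := by
      have := mem_ball_iff_norm.mp hx
      simpa using this
    have hρ : (0:ℝ) < r₀/8 := by positivity
    have hsub : closedBall x (r₀/8) ⊆ closedBall u₀ (r₀/2) := by
      intro y hy
      rw [Metric.mem_closedBall, Complex.dist_eq] at hy ⊢
      calc ‖y - u₀‖ ≤ ‖y - x‖ + ‖x - u₀‖ := by
            simpa using norm_sub_le_norm_sub_add_norm_sub y x u₀
        _ ≤ r₀/8 + r₀/4 := add_le_add hy hx'.le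
        _ ≤ r₀/2 := by linarith
    have hdiff2 : DifferentiableOn ℂ (fun y => f (y, w θ)) (closedBall x (r₀/8)) := by
      intro y hy
      have hy0 : y ≠ 0 := hne y (by
        have := hsub hy
        simpa [Metric.mem_closedBall, Complex.dist_eq] using this)
      exact (slice1 hf (w θ) hy0).differentiableWithinAt
    have hderiv_bound : ‖deriv (fun y => f (y, w θ)) x‖ ≤ M / (r₀/8) := by
      apply norm_deriv_le_of_forall_mem_sphere_norm_le hρ
      · apply DifferentiableOn.diffContOnCl
        rwa [closure_ball x hρ.ne']
      · intro z hz
        refine hM (z, w θ) ⟨hsub (sphere_subset_closedBall hz), ?_⟩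
        simp [Complex.dist_eq, hwabs θ]
    calc ‖F' x θ‖ = ‖k θ‖ * ‖deriv (fun y => f (y, w θ)) x‖ := norm_mul _ _
      _ ≤ 1 * (M / (r₀/8)) := by
          apply mul_le_mul (hk_norm θ) hderiv_bound (norm_nonneg _) zero_le_one
      _ = M / (r₀/8) := one_mul _
  case hbi => exact intervalIntegrable_const
  case hdiff =>
    apply MeasureTheory.ae_of_all
    intro θ _ x hx
    have hx0 : x ≠ 0 := hne x (by
      have := mem_ball_iff_norm.mp hx
      linarith)
    exact ((slice1 hf (w θ) hx0).hasDerivAt).const_mul (k θ)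


/-- iterated derivative of a constant multiple of an entire function -/
lemma iteratedDeriv_const_mul_entire {g : ℂ → ℂ} (hg : Differentiable ℂ g) (c : ℂ) (n : ℕ) :
    ∀ x : ℂ, iteratedDeriv n (fun y => c * g y) x = c * iteratedDeriv n g x := by
  have hcd : ∀ m : ℕ, ContDiff ℂ (m : ℕ∞) g :=
    fun m => (Complex.analyticOnNhd_univ_iff_differentiable.mpr hg).contDiff
  induction n with
  | zero => intro x; simp
  | succ n ih =>
    intro x
    rw [iteratedDeriv_succ, iteratedDeriv_succ]
    have hfun : iteratedDeriv n (fun y => c * g y) = fun y => c * iteratedDeriv n g y :=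
      funext ih
    rw [hfun]
    apply deriv_const_mul
    exact ((hcd (n+1)).differentiable_iteratedDeriv n
      (by exact_mod_cast Nat.lt_succ_self n)).differentiableAt

/-- One-variable key lemma: a function holomorphic on `ℂ \ {0}` satisfying
`ψ u = a₂ ^ l * ψ (a₁ u)` is constant on `ℂ \ {0}`. -/
lemma L1 (a₁ a₂ : ℂ) (h₁ : 0 < ‖a₁‖) (h₁₂ : ‖a₁‖ ≤ ‖a₂‖)
    (h₂ : ‖a₂‖ < 1)
    (hres : ∀ k l : ℕ, (k, l) ≠ (0, 0) → a₁ ^ k ≠ a₂ ^ l)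
    (l : ℕ) (ψ : ℂ → ℂ) (hψ : DifferentiableOn ℂ ψ {u : ℂ | u ≠ 0})
    (hfe : ∀ u : ℂ, u ≠ 0 → ψ u = a₂ ^ l * ψ (a₁ * u)) :
    ∀ u : ℂ, u ≠ 0 → ∀ u' : ℂ, u' ≠ 0 → ψ u = ψ u' := by
  have ha₁ : a₁ ≠ 0 := by
    intro h; rw [h] at h₁; simp at h₁
  have ha₂ : a₂ ≠ 0 := by
    intro h; rw [h] at h₁₂; simp at h₁₂; exact absurd h₁₂ ha₁
  have habs1 : ‖a₁‖ < 1 := lt_of_le_of_lt h₁₂ h₂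
  set χ : ℂ → ℂ := fun u => u ^ l * ψ u with hχ
  have hχfe : ∀ u : ℂ, u ≠ 0 → a₂ ^ l * χ (a₁ * u) = a₁ ^ l * χ u := by
    intro u hu
    simp only [hχ]
    linear_combination (-(a₁ ^ l * u ^ l)) * (hfe u hu)
  have hχdiff : DifferentiableOn ℂ χ {u : ℂ | u ≠ 0} :=
    (differentiable_pow l).differentiableOn.mul hψ
  -- compact annulus bound
  set A : Set ℂ := (fun z : ℂ => ‖z‖) ⁻¹' (Icc ‖a₁‖ 1) with hA
  have hAsub : A ⊆ {u : ℂ | u ≠ 0} := by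
    intro z hz h0
    rw [h0] at hz
    simp only [hA, mem_preimage, norm_zero, mem_Icc] at hz
    linarith [hz.1]
  have hAcomp : IsCompact A := by
    apply Metric.isCompact_of_isClosed_isBounded
    · exact isClosed_Icc.preimage continuous_norm
    · apply Bornology.IsBounded.subset (Metric.isBounded_closedBall (x := (0:ℂ)) (r := 1))
      intro z hz
      simp only [hA, mem_preimage, mem_Icc] at hz
      simpa [Complex.dist_eq] using hz.2
  obtain ⟨M, hM⟩ : ∃ M, ∀ z ∈ A, ‖χ z‖ ≤ M :=
    hAcomp.exists_bound_of_continuousOn (hχdiff.continuousOn.mono hAsub)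
  have bound_claim : ∀ n : ℕ, ∀ z : ℂ, z ≠ 0 →
      (‖a₁‖) ^ (n+1) ≤ ‖z‖ → ‖z‖ ≤ 1 → ‖χ z‖ ≤ M := by
    intro n
    induction n with
    | zero =>
      intro z hz hlo hhi
      exact hM z (by simp only [hA, mem_preimage, mem_Icc]; exact ⟨by simpa using hlo, hhi⟩)
    | succ n ih =>
      intro z hz hlo hhi
      by_cases hcase : (‖a₁‖) ^ (n+1) ≤ ‖z‖
      · exact ih z hz hcase hhi
      · push_neg at hcase
        set u : ℂ := z / a₁ with hu
        have hu0 : u ≠ 0 := div_ne_zero hz ha₁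
        have hz_eq : z = a₁ * u := by rw [hu]; field_simp
        have habsu : ‖u‖ = ‖z‖ / ‖a₁‖ := by
          rw [hu, norm_div]
        have hu1 : (‖a₁‖) ^ (n+1) ≤ ‖u‖ := by
          rw [habsu, le_div_iff₀ h₁]
          calc ‖a₁‖ ^ (n+1) * ‖a₁‖ = ‖a₁‖ ^ (n+2) := by ring
            _ ≤ ‖z‖ := hlo
        have hu2 : ‖u‖ ≤ 1 := by
          rw [habsu, div_le_one h₁]
          calc ‖z‖ ≤ ‖a₁‖ ^ (n+1) := hcase.le
            _ ≤ ‖a₁‖ ^ 1 := pow_le_pow_of_le_one h₁.le habs1.le (by omega)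
            _ = ‖a₁‖ := pow_one _
        have hMu := ih u hu0 hu1 hu2
        have hkey := hχfe u hu0
        have hz' : χ z = a₁ ^ l / a₂ ^ l * χ u := by
          rw [hz_eq]
          field_simp
          linear_combination hkey
        rw [hz']
        have : ‖a₁ ^ l / a₂ ^ l * χ u‖ = (‖a₁‖ / ‖a₂‖) ^ l * ‖χ u‖ := by
          simp [norm_mul, norm_div, norm_pow, div_pow]
        rw [this]
        have hle1 : (‖a₁‖ / ‖a₂‖) ^ l ≤ 1 := by
          apply pow_le_one₀ (by positivity)
          rw [div_le_one (lt_of_lt_of_le h₁ h₁₂)]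
          exact h₁₂
        calc (‖a₁‖ / ‖a₂‖) ^ l * ‖χ u‖ ≤ 1 * ‖χ u‖ :=
              mul_le_mul_of_nonneg_right hle1 (norm_nonneg _)
          _ = ‖χ u‖ := one_mul _
          _ ≤ M := hMu
  have bounded : ∀ z ∈ ball (0:ℂ) 1 \ {(0:ℂ)}, ‖χ z‖ ≤ M := by
    rintro z ⟨hz1, hz0⟩
    have hz0' : z ≠ 0 := hz0
    have hzpos : 0 < ‖z‖ := by
      simpa [norm_pos_iff] using hz0'
    obtain ⟨n, hn⟩ := exists_pow_lt_of_lt_one hzpos habs1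
    apply bound_claim n z hz0'
    · calc (‖a₁‖) ^ (n+1) = (‖a₁‖) ^ n * ‖a₁‖ := pow_succ _ _
        _ ≤ (‖a₁‖) ^ n * 1 := by
            apply mul_le_mul_of_nonneg_left habs1.le (pow_nonneg (by positivity) n)
        _ = (‖a₁‖) ^ n := mul_one _
        _ ≤ ‖z‖ := hn.le
    · have := mem_ball_iff_norm.mp hz1
      simpa using this.le
  -- removable singularity
  set X : ℂ → ℂ := Function.update χ 0 (limUnder (𝓝[≠] (0:ℂ)) χ) with hX
  have hXball : DifferentiableOn ℂ X (ball (0:ℂ) 1) := by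
    apply Complex.differentiableOn_update_limUnder_of_bddAbove
      (isOpen_ball.mem_nhds (by simp))
    · exact hχdiff.mono (fun z hz => hz.2)
    · refine ⟨M, ?_⟩
      rintro - ⟨z, hz, rfl⟩
      exact bounded z hz
  have hXeq : ∀ z : ℂ, z ≠ 0 → X z = χ z := by
    intro z hz
    simp only [hX]
    exact Function.update_of_ne hz _ _
  have hXent : Differentiable ℂ X := by
    intro z
    by_cases hz : z = 0
    · subst hz
      exact hXball.differentiableAt (isOpen_ball.mem_nhds (by simp))
    · have h1 : DifferentiableAt ℂ χ z :=
        hχdiff.differentiableAt (isOpen_ne.mem_nhds hz)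
      apply h1.congr_of_eventuallyEq
      filter_upwards [isOpen_ne.mem_nhds hz] with y hy
      exact hXeq y hy
  have hXFE : ∀ z : ℂ, a₂ ^ l * X (a₁ * z) = a₁ ^ l * X z := by
    have hfun : (fun z => a₂ ^ l * X (a₁ * z)) = fun z => a₁ ^ l * X z := by
      apply Continuous.ext_on (dense_compl_singleton (0:ℂ))
      · exact continuous_const.mul (hXent.continuous.comp (continuous_const.mul continuous_id))
      · exact continuous_const.mul hXent.continuous
      · intro z hz
        have hz0 : z ≠ 0 := hz
        show a₂ ^ l * X (a₁ * z) = a₁ ^ l * X z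
        rw [hXeq _ (mul_ne_zero ha₁ hz0), hXeq _ hz0]
        exact hχfe z hz0
    exact fun z => congrFun hfun z
  -- coefficients
  have hDrel : ∀ n : ℕ, a₂ ^ l * (a₁ ^ n * iteratedDeriv n X 0) = a₁ ^ l * iteratedDeriv n X 0 := by
    intro n
    have h1 : iteratedDeriv n (fun z => a₂ ^ l * X (a₁ * z)) 0
        = iteratedDeriv n (fun z => a₁ ^ l * X z) 0 := by
      congr 1
      exact funext hXFE
    have h2 : iteratedDeriv n (fun z => a₂ ^ l * X (a₁ * z)) 0
        = a₂ ^ l * (a₁ ^ n * iteratedDeriv n X 0) := by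
      have hcomp : Differentiable ℂ (fun z => X (a₁ * z)) :=
        hXent.comp ((differentiable_id).const_mul a₁)
      rw [iteratedDeriv_const_mul_entire hcomp (a₂ ^ l) n 0]
      congr 1
      have hcd : ContDiff ℂ (n : ℕ∞) X :=
        (Complex.analyticOnNhd_univ_iff_differentiable.mpr hXent).contDiff
      have := iteratedDeriv_comp_const_mul hcd a₁
      rw [congrFun this 0, mul_zero]
    have h3 : iteratedDeriv n (fun z => a₁ ^ l * X z) 0 = a₁ ^ l * iteratedDeriv n X 0 :=
      iteratedDeriv_const_mul_entire hXent (a₁ ^ l) n 0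
    rw [← h2, h1, h3]
  have hD : ∀ n : ℕ, ¬(l = 0 ∧ n = 0) → iteratedDeriv n X 0 = 0 := by
    intro n hn
    have hfac : a₂ ^ l * a₁ ^ n ≠ a₁ ^ l := by
      intro heq
      rcases Nat.eq_zero_or_pos l with hl0 | hlpos
      · subst hl0
        have hn0 : n ≠ 0 := fun h => hn ⟨rfl, h⟩
        simp only [pow_zero, one_mul] at heq
        have : ‖a₁ ^ n‖ = 1 := by rw [heq]; simp
        rw [norm_pow] at this
        have hlt : ‖a₁‖ ^ n < 1 := pow_lt_one₀ h₁.le habs1 hn0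
        linarith
      · rcases le_or_gt l n with hln | hnl
        · obtain ⟨m, rfl⟩ := Nat.exists_eq_add_of_le hln
          rw [pow_add] at heq
          have h4 : a₁ ^ l * (a₂ ^ l * a₁ ^ m) = a₁ ^ l * 1 := by ring_nf; linear_combination heq
          have h5 : a₂ ^ l * a₁ ^ m = 1 := mul_left_cancel₀ (pow_ne_zero l ha₁) h4
          have habs : ‖a₂ ^ l * a₁ ^ m‖ < 1 := by
            rw [norm_mul, norm_pow, norm_pow]
            calc ‖a₂‖ ^ l * ‖a₁‖ ^ m
                ≤ ‖a₂‖ ^ l * 1 := by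
                  apply mul_le_mul_of_nonneg_left (pow_le_one₀ h₁.le habs1.le) (by positivity)
              _ = ‖a₂‖ ^ l := mul_one _
              _ < 1 := pow_lt_one₀ (by positivity) h₂ hlpos.ne'
          rw [h5] at habs
          simp at habs
        · obtain ⟨m, hm⟩ := Nat.exists_eq_add_of_lt hnl
          have hm' : l = n + (m + 1) := by omega
          subst hm'
          have h4 : a₁ ^ n * a₂ ^ (n + (m+1)) = a₁ ^ n * a₁ ^ (m+1) := by
            linear_combination heq
          have h5 : a₂ ^ (n + (m+1)) = a₁ ^ (m+1) := mul_left_cancel₀ (pow_ne_zero n ha₁) h4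
          exact hres (m+1) (n + (m+1)) (by simp) h5.symm
    have := hDrel n
    have h6 : (a₂ ^ l * a₁ ^ n - a₁ ^ l) * iteratedDeriv n X 0 = 0 := by linear_combination this
    rcases mul_eq_zero.mp h6 with h | h
    · exact absurd (by linear_combination h) hfac
    · exact h
  -- Taylor series: X is affine-constant
  have hXval : ∀ z : ℂ, X z = iteratedDeriv 0 X 0 := by
    intro z
    have := Complex.taylorSeries_eq_of_entire' 0 z hXent
    rw [← this]
    rw [tsum_eq_single 0]
    · simp
    · intro n hn
      rw [hD n (fun h => hn h.2)]
      simp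
  rcases Nat.eq_zero_or_pos l with hl0 | hlpos
  · intro u hu u' hu'
    have h1 : ψ u = X u := by
      rw [hXeq u hu, hχ]; subst hl0; simp
    have h2 : ψ u' = X u' := by
      rw [hXeq u' hu', hχ]; subst hl0; simp
    rw [h1, h2, hXval u, hXval u']
  · have hX0 : iteratedDeriv 0 X 0 = 0 := hD 0 (fun h => hlpos.ne' h.1)
    intro u hu u' hu'
    have hzero : ∀ v : ℂ, v ≠ 0 → ψ v = 0 := by
      intro v hv
      have h1 : χ v = 0 := by
        rw [← hXeq v hv, hXval v, hX0]
      have h2 : v ^ l * ψ v = 0 := h1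
      rcases mul_eq_zero.mp h2 with h | h
      · exact absurd h (pow_ne_zero l hv)
      · exact h
    rw [hzero u hu, hzero u' hu']


end Stmt6Aux

open Stmt6Aux

/-- Under the non-resonance condition, a function holomorphic on
`{z₁ ≠ 0} ⊂ ℂ²` and invariant under `(z₁,z₂) ↦ (a₁z₁, a₂z₂)` is constant there. -/
theorem stmt_6 (a₁ a₂ : ℂ)
    (h₁ : 0 < ‖a₁‖) (h₁₂ : ‖a₁‖ ≤ ‖a₂‖)
    (h₂ : ‖a₂‖ < 1)
    (hres : ∀ k l : ℕ, (k, l) ≠ (0, 0) → a₁ ^ k ≠ a₂ ^ l)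
    (f : ℂ × ℂ → ℂ)
    (hf : DifferentiableOn ℂ f {z : ℂ × ℂ | z.1 ≠ 0})
    (hinv : ∀ z : ℂ × ℂ, z.1 ≠ 0 → f (a₁ * z.1, a₂ * z.2) = f z) :
    ∀ z w : ℂ × ℂ, z.1 ≠ 0 → w.1 ≠ 0 → f z = f w := by
  have ha₁ : a₁ ≠ 0 := by
    intro h; rw [h] at h₁; simp at h₁
  set c : ℕ → ℂ → ℂ := fun l u => iteratedDeriv l (fun v => f (u, v)) 0 with hc
  -- functional equation
  have hFE : ∀ l : ℕ, ∀ u : ℂ, u ≠ 0 → c l u = a₂ ^ l * c l (a₁ * u) := by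
    intro l u hu
    have hfun : (fun v => f (u, v)) = fun v => f (a₁ * u, a₂ * v) :=
      funext fun v => (hinv (u, v) hu).symm
    have hcd : ContDiff ℂ (l : ℕ∞) (fun v => f (a₁ * u, v)) :=
      (Complex.analyticOnNhd_univ_iff_differentiable.mpr
        (slice2 hf (mul_ne_zero ha₁ hu))).contDiff
    have h2 := iteratedDeriv_comp_const_mul hcd a₂
    calc c l u = iteratedDeriv l (fun v => f (a₁ * u, a₂ * v)) 0 := by simp only [hc]; rw [hfun]
      _ = a₂ ^ l * iteratedDeriv l (fun v => f (a₁ * u, v)) (a₂ * 0) := congrFun h2 0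
      _ = a₂ ^ l * c l (a₁ * u) := by rw [mul_zero]
  -- integral representation and differentiability in u
  have hdiff : ∀ l : ℕ, DifferentiableOn ℂ (c l) {u : ℂ | u ≠ 0} := by
    intro l
    have hrep : ∀ u : ℂ, u ≠ 0 → c l u =
        ((Nat.factorial l : ℕ) : ℂ) * ((2 * Real.pi * I)⁻¹ *
          ∮ z in C(0, (1:ℝ)), (1/z) ^ l • z⁻¹ • f (u, z)) := by
      intro u hu
      have hg : Differentiable ℂ (fun v => f (u, v)) := slice2 hf hu
      have hball := DifferentiableOn.hasFPowerSeriesOnBall (R := 1) (c := 0)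
        (hg.differentiableOn (s := closedBall 0 ((1:NNReal):ℝ))) one_pos
      simp only [NNReal.coe_one] at hball
      have hfs := hball.factorial_smul (1 : ℂ) l
      have happ := cauchyPowerSeries_apply (fun v => f (u, v)) 0 (1:ℝ) l 1
      rw [happ] at hfs
      have hiter : c l u = iteratedFDeriv ℂ l (fun v => f (u, v)) 0 (fun _ => 1) := by
        simp only [hc]
        exact iteratedDeriv_eq_iteratedFDeriv
      rw [hiter, ← hfs]
      simp only [sub_zero, nsmul_eq_mul, smul_eq_mul, one_div]
    have hD : DifferentiableOn ℂ
        (fun u => ((Nat.factorial l : ℕ) : ℂ) * ((2 * Real.pi * I)⁻¹ *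
          ∮ z in C(0, (1:ℝ)), (1/z) ^ l • z⁻¹ • f (u, z))) {u : ℂ | u ≠ 0} := by
      intro u hu
      exact (((param_diff hf l hu).const_mul _).const_mul _).differentiableWithinAt
    exact hD.congr hrep
  -- constancy of each coefficient
  have hconst : ∀ l : ℕ, ∀ u : ℂ, u ≠ 0 → ∀ u' : ℂ, u' ≠ 0 → c l u = c l u' :=
    fun l => L1 a₁ a₂ h₁ h₁₂ h₂ hres l (c l) (hdiff l) (fun u hu => hFE l u hu)
  -- higher coefficients vanish
  have hzero : ∀ l : ℕ, l ≠ 0 → ∀ u : ℂ, u ≠ 0 → c l u = 0 := by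
    intro l hl u hu
    have h1 : c l u = a₂ ^ l * c l (a₁ * u) := hFE l u hu
    have h2 : c l (a₁ * u) = c l u := hconst l (a₁ * u) (mul_ne_zero ha₁ hu) u hu
    rw [h2] at h1
    have hne1 : a₂ ^ l ≠ 1 := by
      intro h
      have : ‖a₂ ^ l‖ = 1 := by rw [h]; simp
      rw [norm_pow] at this
      have : ‖a₂‖ ^ l < 1 := pow_lt_one₀ (by positivity) h₂ hl
      linarith
    have h3 : (1 - a₂ ^ l) * c l u = 0 := by linear_combination h1
    rcases mul_eq_zero.mp h3 with h | h
    · exact absurd (by linear_combination -h) hne1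
    · exact h
  -- reconstruction
  have hrec : ∀ u : ℂ, u ≠ 0 → ∀ v : ℂ, f (u, v) = c 0 u := by
    intro u hu v
    have := Complex.taylorSeries_eq_of_entire' 0 v (slice2 hf hu)
    rw [← this, tsum_eq_single 0]
    · simp [hc]
    · intro n hn
      have : c n u = 0 := hzero n hn u hu
      simp only [hc] at this
      rw [this]
      simp
  intro z w hz hw
  have h1 : f z = c 0 z.1 := by
    have := hrec z.1 hz z.2
    simpa using this
  have h2 : f w = c 0 w.1 := by
    have := hrec w.1 hw w.2
    simpa using this
  rw [h1, h2, hconst 0 z.1 hz w.1 hw]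
end

section
/- Let a₁, a₂ be complex numbers with 0 < |a₁| ≤ |a₂| < 1 such that a₁^k ≠ a₂^l for every pair of natural numbers (k, l) ≠ (0, 0). Let f : ℂ × ℂ → ℂ be holomorphic on the open set {(z₁, z₂) ∈ ℂ² : z₁ ≠ 0 and z₂ ≠ 0} and suppose f(a₁ z₁, a₂ z₂) = f(z₁, z₂) for all (z₁, z₂) with z₁ ≠ 0 and z₂ ≠ 0. Then f is constant on {z₁ ≠ 0, z₂ ≠ 0}: f(z) = f(w) for all z, w in this set. -/
open Complex Metric Set Filter intervalIntegral Topology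


lemma circleMap_scale (a : ℂ) (r : ℝ) (θ : ℝ) :
    a * circleMap 0 r θ = circleMap 0 (‖a‖ * r) (θ + Complex.arg a) := by
  simp only [circleMap, zero_add]
  nth_rewrite 1 [← Complex.norm_mul_exp_arg_mul_I a]
  push_cast
  rw [add_mul, Complex.exp_add]
  ring

lemma circle_scale (g : ℂ → ℂ) {a : ℂ} (ha : a ≠ 0) (r : ℝ) :
    (∮ z in C(0, r), g (a * z)) = a⁻¹ * ∮ z in C(0, ‖a‖ * r), g z := by
  set R := ‖a‖ * r with hR
  set φ := Complex.arg a with hφ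
  have key : ∀ θ : ℝ, deriv (circleMap 0 r) θ • g (a * circleMap 0 r θ)
      = a⁻¹ * (deriv (circleMap 0 R) (θ + φ) • g (circleMap 0 R (θ + φ))) := by
    intro θ
    rw [deriv_circleMap, deriv_circleMap, ← circleMap_scale a r θ, smul_eq_mul, smul_eq_mul]
    field_simp
  have hper : Function.Periodic
      (fun θ => deriv (circleMap 0 R) θ • g (circleMap 0 R θ)) (2 * Real.pi) := by
    intro θ
    simp only [deriv_circleMap, periodic_circleMap _ _ θ]
  calc (∮ z in C(0, r), g (a * z))
      = ∫ θ in (0:ℝ)..2 * Real.pi, a⁻¹ * (deriv (circleMap 0 R) (θ + φ) •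
          g (circleMap 0 R (θ + φ))) := by
        simp only [circleIntegral, key]
    _ = a⁻¹ * ∫ θ in (0:ℝ)..2 * Real.pi,
          (fun t => deriv (circleMap 0 R) t • g (circleMap 0 R t)) (θ + φ) :=
        intervalIntegral.integral_const_mul _ _
    _ = a⁻¹ * ∮ z in C(0, R), g z := by
        congr 1
        rw [intervalIntegral.integral_comp_add_right
          (fun t => deriv (circleMap 0 R) t • g (circleMap 0 R t)) φ]
        rw [show (0:ℝ) + φ = φ by ring, show 2 * Real.pi + φ = φ + 2 * Real.pi by ring]
        rw [hper.intervalIntegral_add_eq φ 0]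
        simp [circleIntegral]


lemma radind {g : ℂ → ℂ} (hg : DifferentiableOn ℂ g {z : ℂ | z ≠ 0}) {r R : ℝ}
    (hr : 0 < r) (hR : 0 < R) : (∮ z in C(0, R), g z) = ∮ z in C(0, r), g z := by
  have main : ∀ (u v : ℝ), 0 < u → u ≤ v →
      (∮ z in C(0, v), g z) = ∮ z in C(0, u), g z := by
    intro u v hu huv
    refine circleIntegral_eq_of_differentiable_on_annulus_off_countable hu huv countable_empty
      (hg.continuousOn.mono ?_) (fun z hz => (hg.differentiableAt ?_))
    · intro z hz
      simp only [mem_diff, mem_closedBall, mem_ball, dist_zero_right] at hz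
      simp only [mem_setOf_eq]
      intro h0
      rw [h0] at hz
      simp at hz
      exact absurd hz.2 (not_le.2 hu)
    · rcases hz with ⟨⟨_, hz2⟩, -⟩
      refine (isOpen_compl_singleton (x := (0:ℂ))).mem_nhds ?_
      simp only [mem_closedBall, dist_zero_right, not_le] at hz2
      simp only [mem_compl_iff, mem_singleton_iff]
      intro h0; rw [h0] at hz2; simp at hz2; exact absurd hz2 (not_lt.2 hu.le)
  rcases le_total r R with h | h
  · exact main r R hr h
  · exact (main R r hR h).symm

lemma sphere_ne_zero {u : ℝ} (hu : 0 < u) {z : ℂ} (hz : z ∈ sphere (0:ℂ) u) : z ≠ 0 := by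
  simp only [mem_sphere_iff_norm, sub_zero] at hz
  intro h; rw [h] at hz; simp at hz; exact hu.ne' hz.symm

lemma circleIntegral_add' {f g : ℂ → ℂ} {c : ℂ} {R : ℝ} (hf : CircleIntegrable f c R)
    (hg : CircleIntegrable g c R) :
    (∮ z in C(c, R), (f z + g z)) = (∮ z in C(c, R), f z) + ∮ z in C(c, R), g z := by
  simp only [circleIntegral, smul_add, intervalIntegral.integral_add hf.out hg.out]

lemma key {g : ℂ → ℂ} (hg : DifferentiableOn ℂ g {z : ℂ | z ≠ 0})
    (hmom : ∀ (m : ℤ) (r : ℝ), 0 < r → (∮ z in C(0, r), z ^ m * g z) = 0) :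
    ∀ w : ℂ, w ≠ 0 → g w = 0 := by
  have hopen : IsOpen {z : ℂ | z ≠ 0} := isOpen_compl_singleton
  intro w hw
  set ρ := ‖w‖ with hρdef
  have hρ : 0 < ρ := norm_pos_iff.mpr hw
  set r := ρ / 2 with hrdef
  set R := 2 * ρ with hRdef
  have hr : 0 < r := by positivity
  have hrρ : r < ρ := by rw [hrdef]; linarith
  have hρR : ρ < R := by rw [hRdef]; linarith
  have hR : 0 < R := lt_trans hρ hρR
  have hwnorm : ‖w‖ = ρ := rfl
  -- continuity of stuff on spheres
  have hgc : ∀ u : ℝ, 0 < u → ContinuousOn g (sphere 0 u) := fun u hu =>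
    hg.continuousOn.mono (fun z hz => sphere_ne_zero hu hz)
  have hzm : ∀ (u : ℝ) (m : ℤ), 0 < u → ContinuousOn (fun z : ℂ => z ^ m * g z) (sphere 0 u) := by
    intro u m hu
    exact (continuousOn_id.zpow₀ m (fun z hz => Or.inl (sphere_ne_zero hu hz))).mul (hgc u hu)
  have hsubw : ∀ (u : ℝ), 0 < u → u ≠ ρ → ∀ z ∈ sphere (0:ℂ) u, z - w ≠ 0 := by
    intro u hu huρ z hz
    simp only [mem_sphere_iff_norm, sub_zero] at hz
    rw [sub_ne_zero]
    intro h
    rw [h, hwnorm] at hz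
    exact huρ hz.symm
  have hker : ∀ u : ℝ, 0 < u → u ≠ ρ → ContinuousOn (fun z : ℂ => (z - w)⁻¹) (sphere 0 u) := by
    intro u hu huρ z hz
    exact ((continuous_sub_right w).continuousWithinAt).inv₀ (hsubw u hu huρ z hz)
  have hci : ∀ (u : ℝ) (m : ℤ), 0 < u → u ≠ ρ →
      CircleIntegrable (fun z => (z - w)⁻¹ * (z ^ m * g z)) 0 u := by
    intro u m hu huρ
    exact ((hker u hu huρ).mul (hzm u m hu)).circleIntegrable hu.le
  have hci2 : ∀ (u : ℝ) (m : ℤ), 0 < u → CircleIntegrable (fun z => z ^ m * g z) 0 u := by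
    intro u m hu
    exact (hzm u m hu).circleIntegrable hu.le
  -- bound for g on big and small circles
  obtain ⟨CR, hCR⟩ := (isCompact_sphere (0:ℂ) R).exists_bound_of_continuousOn (hgc R hR)
  obtain ⟨Cr, hCr⟩ := (isCompact_sphere (0:ℂ) r).exists_bound_of_continuousOn (hgc r hr)
  have hCR0 : 0 ≤ CR := le_trans (norm_nonneg _) (hCR R (by simp [abs_of_pos hR]))
  have hCr0 : 0 ≤ Cr := le_trans (norm_nonneg _) (hCr r (by simp [abs_of_pos hr]))
  -- outer integrals A
  set A : ℕ → ℂ := fun N => ∮ z in C(0, R), (z - w)⁻¹ * (z ^ (-(N:ℤ)) * g z) with hA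
  have hAstep : ∀ N : ℕ, A (N + 1) = w⁻¹ * (A N) := by
    intro N
    have hEq : EqOn (fun z : ℂ => (z - w)⁻¹ * (z ^ (-(N:ℤ) + -1) * g z))
        (fun z : ℂ => w⁻¹ * ((z - w)⁻¹ * (z ^ (-(N:ℤ)) * g z) - z ^ (-(N:ℤ) + -1) * g z))
        (sphere 0 R) := by
      intro z hz
      have hz0 : z ≠ 0 := sphere_ne_zero hR hz
      have hzw : z - w ≠ 0 := hsubw R hR hρR.ne' z hz
      have hsplit : (z:ℂ) ^ (-(N:ℤ) + -1) = z ^ (-(N:ℤ)) * z⁻¹ := by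
        rw [zpow_add₀ hz0, zpow_neg_one]
      have hkey : (z - w)⁻¹ * z⁻¹ = w⁻¹ * ((z - w)⁻¹ - z⁻¹) := by
        field_simp
        ring
      simp only
      rw [hsplit]
      linear_combination (z ^ (-(N:ℤ)) * g z) * hkey
    have hcast : (-(((N:ℕ) + 1 : ℕ) : ℤ)) = -(N:ℤ) + -1 := by push_cast; ring
    have h1 : A (N + 1) = ∮ z in C(0, R),
        w⁻¹ * ((z - w)⁻¹ * (z ^ (-(N:ℤ)) * g z) - z ^ (-(N:ℤ) + -1) * g z) := by
      show (∮ z in C(0, R), (z - w)⁻¹ * (z ^ (-((N:ℕ)+1:ℕ):ℤ) * g z)) = _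
      rw [hcast]
      exact circleIntegral.integral_congr hR.le hEq
    rw [h1]
    have h2 : (∮ z in C(0, R),
        w⁻¹ * ((z - w)⁻¹ * (z ^ (-(N:ℤ)) * g z) - z ^ (-(N:ℤ) + -1) * g z))
        = w⁻¹ * ∮ z in C(0, R), ((z - w)⁻¹ * (z ^ (-(N:ℤ)) * g z) - z ^ (-(N:ℤ) + -1) * g z) := by
      simpa only [smul_eq_mul] using
        circleIntegral.integral_smul (w⁻¹)
          (fun z => ((z - w)⁻¹ * (z ^ (-(N:ℤ)) * g z) - z ^ (-(N:ℤ) + -1) * g z)) 0 R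
    rw [h2, circleIntegral.integral_sub (hci R (-(N:ℤ)) hR hρR.ne') (hci2 R (-(N:ℤ) + -1) hR),
      hmom (-(N:ℤ) + -1) R hR, sub_zero]
  have hA0 : ∀ N : ℕ, A 0 = w ^ N * A N := by
    intro N
    induction N with
    | zero => simp
    | succ n ih =>
      rw [hAstep n, ih, pow_succ]
      have : w * (w⁻¹ * A n) = A n := by field_simp
      rw [mul_assoc, this]
  have hAbound : ∀ N : ℕ, ‖A N‖ ≤ 2 * Real.pi * R * ((R - ρ)⁻¹ * ((R ^ N)⁻¹ * CR)) := by
    intro N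
    have hpt : ∀ z ∈ sphere (0:ℂ) R, ‖(z - w)⁻¹ * (z ^ (-(N:ℤ)) * g z)‖
        ≤ (R - ρ)⁻¹ * ((R ^ N)⁻¹ * CR) := by
      intro z hz
      have hzR : ‖z‖ = R := by simpa using hz
      have h1 : ‖(z - w)⁻¹‖ ≤ (R - ρ)⁻¹ := by
        rw [norm_inv]
        refine inv_anti₀ (by linarith) ?_
        calc R - ρ = ‖z‖ - ‖w‖ := by rw [hzR, hwnorm]
          _ ≤ ‖z - w‖ := norm_sub_norm_le z w
      have h2 : ‖(z:ℂ) ^ (-(N:ℤ))‖ = (R ^ N)⁻¹ := by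
        rw [norm_zpow, hzR, zpow_neg, zpow_natCast]
      have h3 : ‖g z‖ ≤ CR := hCR z hz
      calc ‖(z - w)⁻¹ * (z ^ (-(N:ℤ)) * g z)‖
          = ‖(z - w)⁻¹‖ * (‖(z:ℂ) ^ (-(N:ℤ))‖ * ‖g z‖) := by simp [norm_mul]
        _ ≤ (R - ρ)⁻¹ * ((R ^ N)⁻¹ * CR) := by
            apply mul_le_mul h1 ?_ (by positivity) (inv_nonneg.2 (by linarith))
            rw [h2]
            exact mul_le_mul_of_nonneg_left h3 (by positivity)
    exact circleIntegral.norm_integral_le_of_norm_le_const hR.le hpt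
  have hA0zero : A 0 = 0 := by
    have hb : ∀ N : ℕ, ‖A 0‖ ≤ (2 * Real.pi * R * ((R - ρ)⁻¹ * CR)) * (ρ / R) ^ N := by
      intro N
      rw [hA0 N, norm_mul, norm_pow, hwnorm]
      calc ρ ^ N * ‖A N‖ ≤ ρ ^ N * (2 * Real.pi * R * ((R - ρ)⁻¹ * ((R ^ N)⁻¹ * CR))) :=
            mul_le_mul_of_nonneg_left (hAbound N) (by positivity)
        _ = (2 * Real.pi * R * ((R - ρ)⁻¹ * CR)) * (ρ / R) ^ N := by
            rw [div_pow]
            field_simp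
    have hlim : Tendsto (fun N : ℕ => (2 * Real.pi * R * ((R - ρ)⁻¹ * CR)) * (ρ / R) ^ N)
        atTop (𝓝 0) := by
      have := (tendsto_pow_atTop_nhds_zero_of_lt_one
        (r := ρ/R) (by positivity) (by rw [div_lt_one hR]; linarith)).const_mul
        (2 * Real.pi * R * ((R - ρ)⁻¹ * CR))
      rwa [mul_zero] at this
    have : ‖A 0‖ ≤ 0 := le_of_tendsto_of_tendsto' tendsto_const_nhds hlim hb
    exact norm_le_zero_iff.1 this
  -- inner integrals B
  set B : ℕ → ℂ := fun N => ∮ z in C(0, r), (z - w)⁻¹ * (z ^ (N:ℤ) * g z) with hB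
  have hBstep : ∀ N : ℕ, B (N + 1) = w * (B N) := by
    intro N
    have hEq : EqOn (fun z : ℂ => (z - w)⁻¹ * (z ^ ((N:ℤ) + 1) * g z))
        (fun z : ℂ => z ^ (N:ℤ) * g z + w * ((z - w)⁻¹ * (z ^ (N:ℤ) * g z)))
        (sphere 0 r) := by
      intro z hz
      have hz0 : z ≠ 0 := sphere_ne_zero hr hz
      have hzw : z - w ≠ 0 := hsubw r hr hrρ.ne z hz
      have hsplit : (z:ℂ) ^ ((N:ℤ) + 1) = z ^ (N:ℤ) * z := zpow_add_one₀ hz0 _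
      have hkey : (z - w)⁻¹ * z = 1 + w * (z - w)⁻¹ := by
        field_simp
        ring
      simp only
      rw [hsplit]
      linear_combination (z ^ ((N:ℤ)) * g z) * hkey
    have hcast : ((((N:ℕ) + 1 : ℕ)) : ℤ) = (N:ℤ) + 1 := by push_cast; ring
    have h1 : B (N + 1) = ∮ z in C(0, r),
        (z ^ (N:ℤ) * g z + w * ((z - w)⁻¹ * (z ^ (N:ℤ) * g z))) := by
      show (∮ z in C(0, r), (z - w)⁻¹ * (z ^ (((N:ℕ)+1:ℕ):ℤ) * g z)) = _
      rw [hcast]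
      exact circleIntegral.integral_congr hr.le hEq
    have hciw : CircleIntegrable (fun z => w * ((z - w)⁻¹ * (z ^ (N:ℤ) * g z))) 0 r :=
      (continuousOn_const.mul ((hker r hr hrρ.ne).mul (hzm r (N:ℤ) hr))).circleIntegrable hr.le
    rw [h1, circleIntegral_add' (hci2 r (N:ℤ) hr) hciw, hmom (N:ℤ) r hr, zero_add]
    have h2 : (∮ z in C(0, r), w * ((z - w)⁻¹ * (z ^ (N:ℤ) * g z)))
        = w * ∮ z in C(0, r), ((z - w)⁻¹ * (z ^ (N:ℤ) * g z)) := by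
      simpa only [smul_eq_mul] using
        circleIntegral.integral_smul (w) (fun z => ((z - w)⁻¹ * (z ^ (N:ℤ) * g z))) 0 r
    rw [h2]
  have hBeq : ∀ N : ℕ, B N = w ^ N * B 0 := by
    intro N
    induction N with
    | zero => simp
    | succ n ih => rw [hBstep n, ih, pow_succ]; ring
  have hBbound : ∀ N : ℕ, ‖B N‖ ≤ 2 * Real.pi * r * ((ρ - r)⁻¹ * (r ^ N * Cr)) := by
    intro N
    have hpt : ∀ z ∈ sphere (0:ℂ) r, ‖(z - w)⁻¹ * (z ^ ((N:ℤ)) * g z)‖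
        ≤ (ρ - r)⁻¹ * (r ^ N * Cr) := by
      intro z hz
      have hzr : ‖z‖ = r := by simpa using hz
      have h1 : ‖(z - w)⁻¹‖ ≤ (ρ - r)⁻¹ := by
        rw [norm_inv]
        refine inv_anti₀ (by linarith) ?_
        calc ρ - r = ‖w‖ - ‖z‖ := by rw [hzr, hwnorm]
          _ ≤ ‖w - z‖ := norm_sub_norm_le w z
          _ = ‖z - w‖ := norm_sub_rev w z
      have h2 : ‖(z:ℂ) ^ ((N:ℤ))‖ = r ^ N := by
        rw [norm_zpow, hzr, zpow_natCast]
      have h3 : ‖g z‖ ≤ Cr := hCr z hz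
      calc ‖(z - w)⁻¹ * (z ^ ((N:ℤ)) * g z)‖
          = ‖(z - w)⁻¹‖ * (‖(z:ℂ) ^ ((N:ℤ))‖ * ‖g z‖) := by simp [norm_mul]
        _ ≤ (ρ - r)⁻¹ * (r ^ N * Cr) := by
            apply mul_le_mul h1 ?_ (by positivity) (inv_nonneg.2 (by linarith))
            rw [h2]
            exact mul_le_mul_of_nonneg_left h3 (by positivity)
    exact circleIntegral.norm_integral_le_of_norm_le_const hr.le hpt
  have hB0zero : B 0 = 0 := by
    have hb : ∀ N : ℕ, ‖B 0‖ ≤ (2 * Real.pi * r * ((ρ - r)⁻¹ * Cr)) * (r / ρ) ^ N := by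
      intro N
      have hρN : (0:ℝ) < ρ ^ N := by positivity
      have h1 : ρ ^ N * ‖B 0‖ ≤ 2 * Real.pi * r * ((ρ - r)⁻¹ * (r ^ N * Cr)) := by
        have hbb := hBbound N
        rw [hBeq N, norm_mul, norm_pow, hwnorm] at hbb
        exact hbb
      have hcan : (r/ρ) ^ N * ρ ^ N = r ^ N := by
        rw [div_pow, div_mul_cancel₀]
        exact pow_ne_zero _ hρ.ne'
      rw [← mul_le_mul_iff_right₀ hρN]
      calc ρ ^ N * ‖B 0‖ ≤ 2 * Real.pi * r * ((ρ - r)⁻¹ * (r ^ N * Cr)) := h1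
        _ = ρ ^ N * ((2 * Real.pi * r * ((ρ - r)⁻¹ * Cr)) * (r / ρ) ^ N) := by
            rw [show ρ ^ N * ((2 * Real.pi * r * ((ρ - r)⁻¹ * Cr)) * (r / ρ) ^ N) =
              (2 * Real.pi * r * ((ρ - r)⁻¹ * Cr)) * ((r/ρ) ^ N * ρ ^ N) from by ring, hcan]
            ring
    have hlim : Tendsto (fun N : ℕ => (2 * Real.pi * r * ((ρ - r)⁻¹ * Cr)) * (r / ρ) ^ N)
        atTop (𝓝 0) := by
      have := (tendsto_pow_atTop_nhds_zero_of_lt_one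
        (r := r/ρ) (by positivity) (by rw [div_lt_one hρ]; linarith)).const_mul
        (2 * Real.pi * r * ((ρ - r)⁻¹ * Cr))
      rwa [mul_zero] at this
    have : ‖B 0‖ ≤ 0 := le_of_tendsto_of_tendsto' tendsto_const_nhds hlim hb
    exact norm_le_zero_iff.1 this
  -- Cauchy via dslope
  have hwmem : {z : ℂ | z ≠ 0} ∈ 𝓝 w := hopen.mem_nhds hw
  obtain ⟨p, hp⟩ := hg.analyticAt hwmem
  have hds : DifferentiableOn ℂ (dslope g w) {z : ℂ | z ≠ 0} := by
    intro z hz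
    rcases eq_or_ne z w with rfl | hne
    · exact (hp.has_fpower_series_dslope_fslope.analyticAt.differentiableAt).differentiableWithinAt
    · exact (differentiableWithinAt_dslope_of_ne hne).2 (hg z hz)
  have hcauchy : (∮ z in C(0, R), dslope g w z) = ∮ z in C(0, r), dslope g w z :=
    radind hds hr hR
  -- rewrite both sides
  have hgwci : ∀ u : ℝ, 0 < u → u ≠ ρ → CircleIntegrable (fun z => g w * (z - w)⁻¹) 0 u := by
    intro u hu huρ
    exact (continuousOn_const.mul (hker u hu huρ)).circleIntegrable hu.le
  have hdsEq : ∀ u : ℝ, 0 < u → u ≠ ρ → EqOn (dslope g w)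
      (fun z : ℂ => (z - w)⁻¹ * (z ^ (0:ℤ) * g z) - g w * (z - w)⁻¹) (sphere 0 u) := by
    intro u hu huρ z hz
    have hzw : z - w ≠ 0 := hsubw u hu huρ z hz
    have hzw' : z ≠ w := fun h => hzw (by rw [h, sub_self])
    rw [dslope_of_ne g hzw', slope_def_field]
    simp only [zpow_zero, one_mul]
    field_simp
  have houter : (∮ z in C(0, R), dslope g w z) = A 0 - g w * (2 * Real.pi * Complex.I) := by
    rw [circleIntegral.integral_congr hR.le (hdsEq R hR hρR.ne'),
      circleIntegral.integral_sub (hci R 0 hR hρR.ne') (hgwci R hR hρR.ne')]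
    congr 1
    have hs : (∮ z in C(0,R), g w * (z - w)⁻¹) = g w * ∮ z in C(0,R), (z - w)⁻¹ := by
      simpa only [smul_eq_mul] using circleIntegral.integral_smul (g w) (fun z => (z - w)⁻¹) 0 R
    rw [hs, circleIntegral.integral_sub_inv_of_mem_ball (by
      simp only [mem_ball, dist_zero_right, hwnorm]; exact hρR)]
  have hinner : (∮ z in C(0, r), dslope g w z) = B 0 - g w * 0 := by
    rw [circleIntegral.integral_congr hr.le (hdsEq r hr hrρ.ne),
      circleIntegral.integral_sub (hci r 0 hr hrρ.ne) (hgwci r hr hrρ.ne)]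
    congr 1
    have hs : (∮ z in C(0,r), g w * (z - w)⁻¹) = g w * ∮ z in C(0,r), (z - w)⁻¹ := by
      simpa only [smul_eq_mul] using circleIntegral.integral_smul (g w) (fun z => (z - w)⁻¹) 0 r
    rw [hs]
    congr 1
    refine circleIntegral_eq_zero_of_differentiable_on_off_countable hr.le countable_empty ?_ ?_
    · intro z hz
      simp only [mem_closedBall, dist_zero_right] at hz
      have hzw : z - w ≠ 0 := by
        rw [sub_ne_zero]
        intro h
        rw [h, hwnorm] at hz
        linarith
      exact ((continuous_sub_right w).continuousWithinAt).inv₀ hzw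
    · intro z hz
      simp only [mem_diff, mem_ball, dist_zero_right] at hz
      refine (differentiableAt_id.sub_const w).inv ?_
      rw [sub_ne_zero]
      intro h
      rw [id] at h
      rw [h, hwnorm] at hz
      have := hz.1
      linarith
  rw [houter, hinner, hA0zero, hB0zero] at hcauchy
  have hfin : g w * (2 * Real.pi * Complex.I) = 0 := by
    rw [mul_zero] at hcauchy
    linear_combination -hcauchy
  rcases mul_eq_zero.1 hfin with h | h
  · exact h
  · exact absurd h Complex.two_pi_I_ne_zero

lemma zpow_mul_diffOn {g : ℂ → ℂ} (hg : DifferentiableOn ℂ g {z : ℂ | z ≠ 0}) (m : ℤ) :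
    DifferentiableOn ℂ (fun z => z ^ m * g z) {z : ℂ | z ≠ 0} := fun z hz =>
  ((differentiableAt_zpow.2 (Or.inl hz)).differentiableWithinAt).mul (hg z hz)

lemma mom_scale (g : ℂ → ℂ) {a : ℂ} (ha : a ≠ 0) (m : ℤ) (r : ℝ) :
    (∮ z in C(0, r), z ^ m * g (a * z))
      = a ^ (-(m+1)) * ∮ z in C(0, ‖a‖ * r), z ^ m * g z := by
  have h1 : (fun z : ℂ => z ^ m * g (a * z))
      = fun z : ℂ => a ^ (-m) * ((fun u => u ^ m * g u) (a * z)) := by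
    funext z
    simp only [mul_zpow]
    rw [← mul_assoc, ← mul_assoc, zpow_neg, inv_mul_cancel₀ (zpow_ne_zero m ha), one_mul]
  rw [h1]
  have h2 : (∮ z in C(0, r), a ^ (-m) * ((fun u => u ^ m * g u) (a * z)))
      = a ^ (-m) * ∮ z in C(0, r), (fun u => u ^ m * g u) (a * z) := by
    simpa only [smul_eq_mul] using
      circleIntegral.integral_smul (a ^ (-m)) (fun z => (fun u => u ^ m * g u) (a * z)) 0 r
  rw [h2, circle_scale (fun u => u ^ m * g u) ha r, ← mul_assoc]
  congr 1
  rw [← zpow_neg_one, ← zpow_add₀ ha]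
  congr 1
  ring

lemma mom_zero_of_eqn {g : ℂ → ℂ} (hg : DifferentiableOn ℂ g {z : ℂ | z ≠ 0})
    {a μ : ℂ} (ha : a ≠ 0) (heq : ∀ z : ℂ, z ≠ 0 → g z = μ * g (a * z))
    {k : ℤ} (hne : μ * a ^ (-(k+1)) ≠ 1) {r : ℝ} (hr : 0 < r) :
    (∮ z in C(0, r), z ^ k * g z) = 0 := by
  have har : 0 < ‖a‖ * r := by
    have := norm_pos_iff.mpr ha
    positivity
  have hEq : EqOn (fun z : ℂ => z ^ k * g z) (fun z : ℂ => μ * (z ^ k * g (a * z)))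
      (sphere 0 r) := by
    intro z hz
    have hz0 : z ≠ 0 := by
      simp only [mem_sphere_iff_norm, sub_zero] at hz
      intro h; rw [h] at hz; simp at hz; exact hr.ne' hz.symm
    simp only
    rw [heq z hz0]
    ring
  have step : (∮ z in C(0, r), z ^ k * g z)
      = μ * a ^ (-(k+1)) * ∮ z in C(0, r), z ^ k * g z := by
    calc (∮ z in C(0, r), z ^ k * g z)
        = ∮ z in C(0, r), μ * (z ^ k * g (a * z)) :=
          circleIntegral.integral_congr hr.le hEq
      _ = μ * ∮ z in C(0, r), z ^ k * g (a * z) := by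
          simpa only [smul_eq_mul] using
            circleIntegral.integral_smul μ (fun z => z ^ k * g (a * z)) 0 r
      _ = μ * (a ^ (-(k+1)) * ∮ z in C(0, ‖a‖ * r), z ^ k * g z) := by
          rw [mom_scale g ha k r]
      _ = μ * a ^ (-(k+1)) * ∮ z in C(0, r), z ^ k * g z := by
          rw [radind (zpow_mul_diffOn hg k) hr har]
          ring
  have : (1 - μ * a ^ (-(k+1))) * (∮ z in C(0, r), z ^ k * g z) = 0 := by
    linear_combination step
  rcases mul_eq_zero.1 this with h | h
  · exact absurd (by linear_combination -h) hne
  · exact h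


lemma param_diff {f : ℂ × ℂ → ℂ}
    (hf : DifferentiableOn ℂ f {z : ℂ × ℂ | z.1 ≠ 0 ∧ z.2 ≠ 0}) (m : ℤ) :
    DifferentiableOn ℂ (fun x => ∮ t in C(0, 1), t ^ m * f (x, t)) {z : ℂ | z ≠ 0} := by
  have hUopen : IsOpen {z : ℂ × ℂ | z.1 ≠ 0 ∧ z.2 ≠ 0} :=
    ((isOpen_compl_singleton (x := (0:ℂ))).preimage continuous_fst).inter
      ((isOpen_compl_singleton (x := (0:ℂ))).preimage continuous_snd)
  intro x₀ hx₀
  have hx₀0 : x₀ ≠ 0 := hx₀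
  refine DifferentiableAt.differentiableWithinAt ?_
  set ε := ‖x₀‖ / 4 with hεdef
  have hε : 0 < ε := by
    have := norm_pos_iff.mpr hx₀0
    positivity
  -- points of the circle
  have hcθ : ∀ θ : ℝ, circleMap 0 1 θ ≠ 0 := fun θ => circleMap_ne_center one_ne_zero
  have hcabs : ∀ θ : ℝ, ‖circleMap 0 1 θ‖ = 1 := by
    intro θ; rw [norm_circleMap_zero]; norm_num
  have hcm : ∀ θ : ℝ, circleMap 0 1 θ ∈ sphere (0:ℂ) 1 :=
    fun θ => circleMap_mem_sphere 0 one_pos.le θ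
  -- nonvanishing near x₀
  have hne : ∀ u : ℂ, ‖u - x₀‖ ≤ 2 * ε → u ≠ 0 := by
    intro u hu h0
    rw [h0] at hu
    have : ‖x₀‖ = ‖0 - x₀‖ := by simp
    rw [← this] at hu
    rw [hεdef] at hu
    have := norm_pos_iff.mpr hx₀0
    linarith
  -- bound on f over compact set
  have hKcomp : IsCompact ((closedBall x₀ (2*ε)) ×ˢ (sphere (0:ℂ) 1)) :=
    (isCompact_closedBall _ _).prod (isCompact_sphere _ _)
  have hKsub : ((closedBall x₀ (2*ε)) ×ˢ (sphere (0:ℂ) 1)) ⊆ {z : ℂ × ℂ | z.1 ≠ 0 ∧ z.2 ≠ 0} := by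
    rintro ⟨u, t⟩ ⟨hu, ht⟩
    refine ⟨hne u ?_, ?_⟩
    · simpa [Complex.dist_eq] using hu
    · intro h0
      have h0' : t = 0 := h0
      simp only [mem_sphere_iff_norm, sub_zero] at ht
      rw [h0'] at ht; simp at ht
  obtain ⟨C, hC⟩ := hKcomp.exists_bound_of_continuousOn (hf.continuousOn.mono hKsub)
  have hC0 : 0 ≤ C := by
    refine le_trans (norm_nonneg (f (x₀, 1))) (hC (x₀, 1) ?_)
    constructor
    · simp [mem_closedBall]; positivity
    · simp
  -- the parametrized integrand
  set F : ℂ → ℝ → ℂ := fun x θ =>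
    (circleMap 0 1 θ * Complex.I) * ((circleMap 0 1 θ) ^ m * f (x, circleMap 0 1 θ)) with hF
  set F' : ℂ → ℝ → ℂ := fun x θ =>
    (circleMap 0 1 θ * Complex.I) * ((circleMap 0 1 θ) ^ m *
      deriv (fun u => f (u, circleMap 0 1 θ)) x) with hF'
  -- partial differentiability in x
  have hdiffx : ∀ (θ : ℝ) (x : ℂ), x ≠ 0 →
      DifferentiableAt ℂ (fun u => f (u, circleMap 0 1 θ)) x := by
    intro θ x hx
    have hmem : (x, circleMap 0 1 θ) ∈ {z : ℂ × ℂ | z.1 ≠ 0 ∧ z.2 ≠ 0} := ⟨hx, hcθ θ⟩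
    have h1 : DifferentiableAt ℂ f (x, circleMap 0 1 θ) :=
      hf.differentiableAt (hUopen.mem_nhds hmem)
    exact h1.comp x (differentiableAt_id.prodMk (differentiableAt_const _))
  have hballne : ∀ x ∈ ball x₀ ε, x ≠ 0 := by
    intro x hx
    refine hne x ?_
    simp only [mem_ball, Complex.dist_eq] at hx
    linarith
  -- derivative bound via Cauchy estimate
  have hbound : ∀ (θ : ℝ), ∀ x ∈ ball x₀ ε, ‖deriv (fun u => f (u, circleMap 0 1 θ)) x‖ ≤ C / ε := by
    intro θ x hx
    simp only [mem_ball, Complex.dist_eq] at hx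
    have hsub : closedBall x ε ⊆ closedBall x₀ (2*ε) := by
      intro u hu
      simp only [mem_closedBall, Complex.dist_eq] at hu ⊢
      calc ‖u - x₀‖ ≤ ‖u - x‖ + ‖x - x₀‖ := by
            simpa using norm_add_le (u - x) (x - x₀)
        _ ≤ 2 * ε := by linarith
    have hd : DiffContOnCl ℂ (fun u => f (u, circleMap 0 1 θ)) (ball x ε) := by
      refine DifferentiableOn.diffContOnCl ?_
      rw [closure_ball x hε.ne']
      intro u hu
      exact (hdiffx θ u (hne u (by simpa [Complex.dist_eq] using hsub hu))).differentiableWithinAt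
    refine Complex.norm_deriv_le_of_forall_mem_sphere_norm_le hε hd ?_
    intro u hu
    refine hC (u, circleMap 0 1 θ) ⟨hsub (sphere_subset_closedBall hu), hcm θ⟩
  -- apply dominated differentiation
  have h2π : (0:ℝ) < 2 * Real.pi := Real.two_pi_pos
  have hcont : ∀ x : ℂ, x ≠ 0 → Continuous (F x) := by
    intro x hx
    have hfc : Continuous (fun θ => f (x, circleMap 0 1 θ)) := by
      refine (hf.continuousOn.comp_continuous
        (continuous_const.prodMk (continuous_circleMap 0 1)) ?_)
      intro θ; exact ⟨hx, hcθ θ⟩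
    exact ((continuous_circleMap 0 1).mul continuous_const).mul
      (((continuous_circleMap 0 1).zpow₀ m (fun θ => Or.inl (hcθ θ))).mul hfc)
  have hmain := intervalIntegral.hasDerivAt_integral_of_dominated_loc_of_deriv_le
    (F := F) (F' := F') (x₀ := x₀) (a := 0) (b := 2 * Real.pi)
    (bound := fun _ => C / ε) (μ := MeasureTheory.volume) (s := ball x₀ ε) (ball_mem_nhds x₀ hε) ?_ ?_ ?_ ?_ ?_ ?_
  · -- conclude
    have heqfun : (fun x => ∮ t in C(0, 1), t ^ m * f (x, t))
        = fun x => ∫ θ in (0:ℝ)..2 * Real.pi, F x θ := by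
      funext x
      simp only [circleIntegral, deriv_circleMap, smul_eq_mul, hF]
    rw [heqfun]
    exact hmain.2.differentiableAt
  · -- hF_meas
    filter_upwards [(isOpen_compl_singleton (x := (0:ℂ))).mem_nhds (by exact hx₀0 : x₀ ∈ {(0:ℂ)}ᶜ)]
      with x hx
    exact (hcont x hx).aestronglyMeasurable
  · exact (hcont x₀ hx₀0).intervalIntegrable _ _
  · -- hF'_meas : limit of difference quotients
    have hseq : Tendsto (fun n : ℕ => x₀ + ((ε / (n+1) : ℝ) : ℂ)) atTop (𝓝[≠] x₀) := by
      refine tendsto_nhdsWithin_of_tendsto_nhds_of_eventually_within _ ?_ ?_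
      · have hr : Tendsto (fun n : ℕ => (ε / (n+1) : ℝ)) atTop (𝓝 0) := by
          have := tendsto_one_div_add_atTop_nhds_zero_nat.const_mul ε
          simpa [div_eq_mul_inv, mul_comm] using this
        have hc : Tendsto (fun n : ℕ => ((ε / (n+1) : ℝ) : ℂ)) atTop (𝓝 0) := by
          have h2 := (Complex.continuous_ofReal.tendsto 0).comp hr
          simpa [Function.comp_def] using h2
        have := tendsto_const_nhds (x := x₀) (f := atTop (α := ℕ))
        simpa using this.add hc
      · refine Eventually.of_forall (fun n => ?_)
        simp only [mem_compl_iff, mem_singleton_iff]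
        intro h
        have h0 : ((ε / (n+1) : ℝ) : ℂ) = 0 := by
          have h1 := congrArg (fun z => z - x₀) h
          simpa using h1
        rw [Complex.ofReal_eq_zero] at h0
        have hp : (0:ℝ) < ε / (n+1) := by positivity
        exact hp.ne' h0
    refine aestronglyMeasurable_of_tendsto_ae atTop (f := fun (n:ℕ) (θ:ℝ) =>
      (circleMap 0 1 θ * Complex.I) * ((circleMap 0 1 θ) ^ m *
        slope (fun u => f (u, circleMap 0 1 θ)) x₀ (x₀ + ((ε / (n+1) : ℝ) : ℂ)))) (fun n => ?_)
      (MeasureTheory.ae_of_all _ (fun θ => ?_))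
    · -- measurability of each quotient
      have hxn : x₀ + ((ε / (n+1) : ℝ) : ℂ) ≠ 0 := by
        refine hne _ ?_
        have h1 : ‖((ε / (n+1) : ℝ) : ℂ)‖ = ε / (n+1) := by
          rw [Complex.norm_real, Real.norm_eq_abs, abs_of_pos (by positivity)]
        simp only [add_sub_cancel_left, h1]
        calc ε / (n+1) ≤ ε / 1 := by
              apply div_le_div_of_nonneg_left hε.le one_pos
              exact_mod_cast Nat.succ_le_succ (Nat.zero_le n)
          _ ≤ 2 * ε := by linarith
      have hfc : ∀ y : ℂ, y ≠ 0 → Continuous (fun θ => f (y, circleMap 0 1 θ)) := by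
        intro y hy
        refine (hf.continuousOn.comp_continuous
          (continuous_const.prodMk (continuous_circleMap 0 1)) ?_)
        intro θ; exact ⟨hy, hcθ θ⟩
      have : Continuous (fun θ : ℝ =>
          (circleMap 0 1 θ * Complex.I) * ((circleMap 0 1 θ) ^ m *
          slope (fun u => f (u, circleMap 0 1 θ)) x₀ (x₀ + ((ε / (n+1) : ℝ) : ℂ)))) := by
        have hslope : Continuous (fun θ : ℝ =>
            slope (fun u => f (u, circleMap 0 1 θ)) x₀ (x₀ + ((ε / (n+1) : ℝ) : ℂ))) := by
          simp only [slope_def_field]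
          exact (((hfc _ hxn).sub (hfc _ hx₀0)).div_const _)
        exact ((continuous_circleMap 0 1).mul continuous_const).mul
          (((continuous_circleMap 0 1).zpow₀ m (fun θ => Or.inl (hcθ θ))).mul hslope)
      exact this.aestronglyMeasurable
    · -- pointwise convergence
      have hd := (hdiffx θ x₀ hx₀0).hasDerivAt
      have htends := (hasDerivAt_iff_tendsto_slope.1 hd).comp hseq
      exact (htends.const_mul ((circleMap 0 1 θ) ^ m)).const_mul (circleMap 0 1 θ * Complex.I)
  · -- h_bound
    refine MeasureTheory.ae_of_all _ (fun θ _ x hx => ?_)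
    have h1 : ‖F' x θ‖ = ‖deriv (fun u => f (u, circleMap 0 1 θ)) x‖ := by
      simp only [hF', norm_mul, hcabs θ, Complex.norm_I]
      rw [show ‖circleMap 0 1 θ ^ m‖ = 1 by
        rw [norm_zpow, hcabs θ, one_zpow]]
      ring
    rw [h1]
    exact hbound θ x hx
  · exact intervalIntegrable_const
  · -- h_diff
    refine MeasureTheory.ae_of_all _ (fun θ _ x hx => ?_)
    have hd := (hdiffx θ x (hballne x hx)).hasDerivAt
    exact (hd.const_mul ((circleMap 0 1 θ) ^ m)).const_mul (circleMap 0 1 θ * Complex.I)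

lemma slice_diffOn {f : ℂ × ℂ → ℂ}
    (hf : DifferentiableOn ℂ f {z : ℂ × ℂ | z.1 ≠ 0 ∧ z.2 ≠ 0})
    {c : ℂ} (hc : c ≠ 0) : DifferentiableOn ℂ (fun t => f (c, t)) {t : ℂ | t ≠ 0} := by
  have hUopen : IsOpen {z : ℂ × ℂ | z.1 ≠ 0 ∧ z.2 ≠ 0} :=
    ((isOpen_compl_singleton (x := (0:ℂ))).preimage continuous_fst).inter
      ((isOpen_compl_singleton (x := (0:ℂ))).preimage continuous_snd)
  intro t ht
  have hmem : ((c, t) : ℂ × ℂ) ∈ {z : ℂ × ℂ | z.1 ≠ 0 ∧ z.2 ≠ 0} := ⟨hc, ht⟩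
  exact ((hf.differentiableAt (hUopen.mem_nhds hmem)).comp t
    ((differentiableAt_const c).prodMk differentiableAt_id)).differentiableWithinAt

lemma mom_const_ne {k : ℤ} (hk : k ≠ -1) (c : ℂ) (r : ℝ) :
    (∮ x in C(0,r), x ^ k * c) = 0 := by
  have h1 : (fun x : ℂ => x ^ k * c) = fun x => c * (x - 0) ^ k := by
    funext x; rw [sub_zero]; ring
  rw [h1]
  have h2 : (∮ x in C(0,r), c * (x-0)^k) = c * ∮ x in C(0,r), (x-0)^k := by
    simpa only [smul_eq_mul] using circleIntegral.integral_smul c (fun x => (x-0)^k) 0 r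
  rw [h2, circleIntegral.integral_sub_zpow_of_ne hk, mul_zero]

lemma mom_const_neg_one (c : ℂ) {r : ℝ} (hr : 0 < r) :
    (∮ x in C(0,r), x ^ (-1:ℤ) * c) = (2 * Real.pi * Complex.I) * c := by
  have h1 : (fun x : ℂ => x ^ (-1:ℤ) * c) = fun x => c * (x - 0)⁻¹ := by
    funext x; rw [sub_zero, zpow_neg_one]; ring
  rw [h1]
  have h2 : (∮ x in C(0,r), c * (x-0)⁻¹) = c * ∮ x in C(0,r), (x-0)⁻¹ := by
    simpa only [smul_eq_mul] using circleIntegral.integral_smul c (fun x => (x-0)⁻¹) 0 r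
  rw [h2, circleIntegral.integral_sub_inv_of_mem_ball (by simp [hr])]
  ring

lemma nr_lemma (a₁ a₂ : ℂ) (h₁ : 0 < ‖a₁‖) (h₁₂ : ‖a₁‖ ≤ ‖a₂‖)
    (h₂ : ‖a₂‖ < 1)
    (hres : ∀ k l : ℕ, (k, l) ≠ (0, 0) → a₁ ^ k ≠ a₂ ^ l) :
    ∀ K L : ℤ, a₁ ^ K * a₂ ^ L = 1 → K = 0 ∧ L = 0 := by
  have h₂0 : 0 < ‖a₂‖ := lt_of_lt_of_le h₁ h₁₂
  have ha₁ : a₁ ≠ 0 := by intro h; rw [h] at h₁; simp at h₁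
  have ha₂ : a₂ ≠ 0 := by intro h; rw [h] at h₂0; simp at h₂0
  have h11 : ‖a₁‖ < 1 := lt_of_le_of_lt h₁₂ h₂
  have aux : ∀ K L : ℤ, 0 ≤ K → a₁ ^ K * a₂ ^ L = 1 → K = 0 ∧ L = 0 := by
    intro K L hK heq
    lift K to ℕ using hK with k
    rcases le_or_gt 0 L with hL | hL
    · lift L to ℕ using hL with l
      rw [zpow_natCast, zpow_natCast] at heq
      have habs : ‖a₁‖ ^ k * ‖a₂‖ ^ l = 1 := by
        have := congrArg norm heq
        simpa [norm_mul, norm_pow] using this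
      have hk1 : ‖a₁‖ ^ k ≤ 1 := pow_le_one₀ (norm_nonneg _) h11.le
      have hl1 : ‖a₂‖ ^ l ≤ 1 := pow_le_one₀ (norm_nonneg _) h₂.le
      have hkp : (0:ℝ) < ‖a₁‖ ^ k := pow_pos h₁ k
      have hlp : (0:ℝ) < ‖a₂‖ ^ l := pow_pos h₂0 l
      constructor
      · by_contra hk
        have hk' : k ≠ 0 := by omega
        have : ‖a₁‖ ^ k < 1 := pow_lt_one₀ (norm_nonneg _) h11 hk'
        nlinarith
      · by_contra hl
        have hl' : l ≠ 0 := by omega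
        have : ‖a₂‖ ^ l < 1 := pow_lt_one₀ (norm_nonneg _) h₂ hl'
        nlinarith
    · exfalso
      have hkn : a₁ ^ (k:ℤ) = a₂ ^ (-L) := by
        rw [zpow_neg]
        exact eq_inv_of_mul_eq_one_left heq
      set l : ℕ := (-L).toNat with hldef
      have hlL : ((l:ℤ)) = -L := Int.toNat_of_nonneg (by omega)
      rw [← hlL, zpow_natCast, zpow_natCast] at hkn
      have hpair : (k, l) ≠ (0, 0) := by
        intro hp
        rw [Prod.mk.injEq] at hp
        omega
      exact hres k l hpair hkn
  intro K L heq
  rcases le_or_gt 0 K with hK | hK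
  · exact aux K L hK heq
  · have heq' : a₁ ^ (-K) * a₂ ^ (-L) = 1 := by
      rw [zpow_neg, zpow_neg, ← mul_inv, heq, inv_one]
    have := aux (-K) (-L) (by omega) heq'
    omega


/-- Under the non-resonance condition, a function holomorphic on
`{z₁ ≠ 0, z₂ ≠ 0} ⊂ ℂ²` and invariant under `(z₁,z₂) ↦ (a₁z₁, a₂z₂)` is constant there. -/
theorem stmt_7 (a₁ a₂ : ℂ)
    (h₁ : 0 < ‖a₁‖) (h₁₂ : ‖a₁‖ ≤ ‖a₂‖)
    (h₂ : ‖a₂‖ < 1)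
    (hres : ∀ k l : ℕ, (k, l) ≠ (0, 0) → a₁ ^ k ≠ a₂ ^ l)
    (f : ℂ × ℂ → ℂ)
    (hf : DifferentiableOn ℂ f {z : ℂ × ℂ | z.1 ≠ 0 ∧ z.2 ≠ 0})
    (hinv : ∀ z : ℂ × ℂ, z.1 ≠ 0 → z.2 ≠ 0 → f (a₁ * z.1, a₂ * z.2) = f z) :
    ∀ z w : ℂ × ℂ, z.1 ≠ 0 → z.2 ≠ 0 → w.1 ≠ 0 → w.2 ≠ 0 → f z = f w := by
  have h₂0 : 0 < ‖a₂‖ := lt_of_lt_of_le h₁ h₁₂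
  have ha₁ : a₁ ≠ 0 := by intro h; rw [h] at h₁; simp at h₁
  have ha₂ : a₂ ≠ 0 := by intro h; rw [h] at h₂0; simp at h₂0
  have nr := nr_lemma a₁ a₂ h₁ h₁₂ h₂ hres
  set g : ℤ → ℂ → ℂ := fun m x => ∮ t in C(0,1), t ^ m * f (x, t) with hgdef
  have gdiff : ∀ m : ℤ, DifferentiableOn ℂ (g m) {x : ℂ | x ≠ 0} :=
    fun m => param_diff hf m
  -- functional equation for g m
  have geq : ∀ (m : ℤ) (x : ℂ), x ≠ 0 → g m x = a₂ ^ (-(m+1)) * g m (a₁ * x) := by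
    intro m x hx
    have hax : a₁ * x ≠ 0 := mul_ne_zero ha₁ hx
    have h1 : EqOn (fun t : ℂ => t ^ m * f (x, t))
        (fun t : ℂ => t ^ m * ((fun s => f (a₁ * x, s)) (a₂ * t))) (sphere 0 1) := by
      intro t ht
      have ht0 : t ≠ 0 := sphere_ne_zero one_pos ht
      simp only
      rw [hinv (x, t) hx ht0]
    calc g m x = ∮ t in C(0,1), t ^ m * ((fun s => f (a₁ * x, s)) (a₂ * t)) :=
          circleIntegral.integral_congr one_pos.le h1
      _ = a₂ ^ (-(m+1)) * ∮ t in C(0, ‖a₂‖ * 1), t ^ m * f (a₁ * x, t) :=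
          mom_scale (fun s => f (a₁ * x, s)) ha₂ m 1
      _ = a₂ ^ (-(m+1)) * g m (a₁ * x) := by
          congr 1
          exact radind (zpow_mul_diffOn (slice_diffOn hf hax) m) one_pos (by positivity)
  -- moments of g m vanish
  have gm_mom : ∀ (m k : ℤ) (r : ℝ), 0 < r → (m + 1 ≠ 0 ∨ k + 1 ≠ 0) →
      (∮ x in C(0, r), x ^ k * g m x) = 0 := by
    intro m k r hr hcase
    refine mom_zero_of_eqn (gdiff m) ha₁ (geq m) ?_ hr
    intro hone
    have h1 : a₁ ^ (-(k+1)) * a₂ ^ (-(m+1)) = 1 := by linear_combination hone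
    have := nr _ _ h1
    omega
  -- g m ≡ 0 for m ≠ -1
  have gzero : ∀ (m : ℤ), m ≠ -1 → ∀ x : ℂ, x ≠ 0 → g m x = 0 := by
    intro m hm
    exact key (gdiff m) (fun k r hr => gm_mom m k r hr (Or.inl (by omega)))
  -- g (-1) is constant
  set M : ℂ := ∮ x in C(0,1), x ^ (-1:ℤ) * g (-1) x with hMdef
  set cc : ℂ := (2 * Real.pi * Complex.I)⁻¹ * M with hccdef
  have h2πI : (2 * (Real.pi:ℂ) * Complex.I) ≠ 0 := Complex.two_pi_I_ne_zero
  have gconst : ∀ x : ℂ, x ≠ 0 → g (-1) x = cc := by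
    have hdiff : DifferentiableOn ℂ (fun x => g (-1) x - cc) {x : ℂ | x ≠ 0} :=
      (gdiff (-1)).sub (differentiableOn_const cc)
    have hmoms : ∀ (k : ℤ) (r : ℝ), 0 < r →
        (∮ x in C(0, r), x ^ k * (g (-1) x - cc)) = 0 := by
      intro k r hr
      have hsplit : (fun x : ℂ => x ^ k * (g (-1) x - cc))
          = fun x : ℂ => x ^ k * g (-1) x - x ^ k * cc := by
        funext x; ring
      have hi1 : CircleIntegrable (fun x => x ^ k * g (-1) x) 0 r := by
        refine ContinuousOn.circleIntegrable hr.le ?_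
        exact ((zpow_mul_diffOn (gdiff (-1)) k).continuousOn).mono
          (fun x hx => sphere_ne_zero hr hx)
      have hi2 : CircleIntegrable (fun x => x ^ k * cc) 0 r := by
        refine ContinuousOn.circleIntegrable hr.le ?_
        exact (continuousOn_id.zpow₀ k (fun x hx => Or.inl (sphere_ne_zero hr hx))).mul
          continuousOn_const
      rw [hsplit, circleIntegral.integral_sub hi1 hi2]
      rcases eq_or_ne k (-1) with rfl | hk
      · rw [mom_const_neg_one cc hr]
        have hM : (∮ x in C(0,r), x ^ (-1:ℤ) * g (-1) x) = M := by
          rw [hMdef]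
          exact radind (zpow_mul_diffOn (gdiff (-1)) (-1)) one_pos hr
        rw [hM, hccdef]
        field_simp
        ring
      · rw [mom_const_ne hk cc r, gm_mom (-1) k r hr (Or.inr (by omega)), sub_zero]
    intro x hx
    have hz := key hdiff hmoms x hx
    exact sub_eq_zero.1 hz
  -- value of f on the slice
  set d : ℂ := (2 * Real.pi * Complex.I)⁻¹ * cc with hddef
  have hfd : ∀ x : ℂ, x ≠ 0 → ∀ t : ℂ, t ≠ 0 → f (x, t) = d := by
    intro x hx
    have hdiff : DifferentiableOn ℂ (fun t => f (x, t) - d) {t : ℂ | t ≠ 0} :=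
      (slice_diffOn hf hx).sub (differentiableOn_const d)
    have hmoms : ∀ (k : ℤ) (r : ℝ), 0 < r →
        (∮ t in C(0, r), t ^ k * (f (x, t) - d)) = 0 := by
      intro k r hr
      have hsplit : (fun t : ℂ => t ^ k * (f (x, t) - d))
          = fun t : ℂ => t ^ k * f (x, t) - t ^ k * d := by
        funext t; ring
      have hi1 : CircleIntegrable (fun t => t ^ k * f (x, t)) 0 r := by
        refine ContinuousOn.circleIntegrable hr.le ?_
        exact ((zpow_mul_diffOn (slice_diffOn hf hx) k).continuousOn).mono
          (fun t ht => sphere_ne_zero hr ht)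
      have hi2 : CircleIntegrable (fun t => t ^ k * d) 0 r := by
        refine ContinuousOn.circleIntegrable hr.le ?_
        exact (continuousOn_id.zpow₀ k (fun t ht => Or.inl (sphere_ne_zero hr ht))).mul
          continuousOn_const
      have hrad : (∮ t in C(0, r), t ^ k * f (x, t)) = g k x := by
        rw [hgdef]
        exact radind (zpow_mul_diffOn (slice_diffOn hf hx) k) one_pos hr
      rw [hsplit, circleIntegral.integral_sub hi1 hi2, hrad]
      rcases eq_or_ne k (-1) with rfl | hk
      · rw [mom_const_neg_one d hr, gconst x hx, hddef]
        field_simp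
        ring
      · rw [mom_const_ne hk d r, gzero k hk x hx, sub_zero]
    intro t ht
    have hz := key hdiff hmoms t ht
    exact sub_eq_zero.1 hz
  intro z w hz1 hz2 hw1 hw2
  have h1 : f z = d := by
    have := hfd z.1 hz1 z.2 hz2
    rwa [Prod.mk.eta] at this
  have h2 : f w = d := by
    have := hfd w.1 hw1 w.2 hw2
    rwa [Prod.mk.eta] at this
  rw [h1, h2]
end

section
/- Let τ be an irrational real number, let c > 0 and θ ∈ ℝ. Consider the subset S = {(c · exp(iθ + τ·w), exp(w)) : w ∈ ℂ} of ℂ². Then the closure of S in ℂ², intersected with the open set {(z₁, z₂) ∈ ℂ² : z₁ ≠ 0 and z₂ ≠ 0}, equals the set {(z₁, z₂) ∈ ℂ² : z₁ ≠ 0, z₂ ≠ 0 and |z₁| = c · |z₂|^τ}. -/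
open Complex Filter Topology

/-- For irrational `τ`, the subgroup `ℤ + ℤτ` is dense in `ℝ`. -/
lemma dense_int_add_int_smul (τ : ℝ) (hτ : Irrational τ) :
    Dense ((AddSubgroup.zmultiples (1 : ℝ) ⊔ AddSubgroup.zmultiples τ : AddSubgroup ℝ) : Set ℝ) := by
  rcases (AddSubgroup.zmultiples (1 : ℝ) ⊔ AddSubgroup.zmultiples τ).dense_or_cyclic with h | ⟨a, ha⟩
  · exact h
  · exfalso
    have h1 : (1 : ℝ) ∈ AddSubgroup.closure {a} := by
      rw [← ha]
      exact AddSubgroup.mem_sup_left (AddSubgroup.mem_zmultiples 1)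
    have hτm : τ ∈ AddSubgroup.closure {a} := by
      rw [← ha]
      exact AddSubgroup.mem_sup_right (AddSubgroup.mem_zmultiples τ)
    rw [AddSubgroup.mem_closure_singleton] at h1 hτm
    obtain ⟨n, hn⟩ := h1
    obtain ⟨m, hm⟩ := hτm
    have hn0 : (n : ℝ) ≠ 0 := by
      intro h
      rw [zsmul_eq_mul, h, zero_mul] at hn
      exact one_ne_zero hn.symm
    have ha0 : a = 1 / n := by
      rw [zsmul_eq_mul] at hn
      field_simp
      linarith [hn]
    refine hτ ⟨(m : ℚ) / (n : ℚ), ?_⟩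
    rw [zsmul_eq_mul, ha0] at hm
    push_cast
    rw [← hm]
    ring

/-- For irrational `τ`, `c > 0`, `θ ∈ ℝ`, the closure in `ℂ²` of the leaf
`S = {(c·exp(iθ + τw), exp w) : w ∈ ℂ}`, intersected with `{z₁ ≠ 0, z₂ ≠ 0}`, is the
Levi-flat hypersurface `{z₁ ≠ 0, z₂ ≠ 0, |z₁| = c·|z₂|^τ}`. -/
theorem stmt_8 (τ : ℝ) (hτ : Irrational τ) (c : ℝ) (hc : 0 < c) (θ : ℝ) :
    (closure {p : ℂ × ℂ | ∃ w : ℂ,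
        p = ((c : ℂ) * Complex.exp ((θ : ℂ) * Complex.I + (τ : ℂ) * w), Complex.exp w)})
      ∩ {p : ℂ × ℂ | p.1 ≠ 0 ∧ p.2 ≠ 0}
    = {p : ℂ × ℂ | p.1 ≠ 0 ∧ p.2 ≠ 0 ∧
        ‖p.1‖ = c * ‖p.2‖ ^ τ} := by
  set A : Set (ℂ × ℂ) := {p : ℂ × ℂ | ∃ w : ℂ,
      p = ((c : ℂ) * Complex.exp ((θ : ℂ) * Complex.I + (τ : ℂ) * w), Complex.exp w)} with hA
  -- On `A`, the defining equation holds.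
  have key : ∀ p ∈ A, ‖p.1‖ = c * ‖p.2‖ ^ τ := by
    rintro p ⟨w, rfl⟩
    simp only [norm_mul, Complex.norm_exp]
    have hre : ((θ : ℂ) * Complex.I + (τ : ℂ) * w).re = τ * w.re := by
      simp [Complex.add_re, Complex.mul_re]
    rw [hre, Complex.norm_of_nonneg hc.le,
      Real.rpow_def_of_pos (Real.exp_pos _), Real.log_exp, mul_comm w.re τ]
  ext p
  simp only [Set.mem_inter_iff, Set.mem_setOf_eq]
  constructor
  · rintro ⟨hcl, h1, h2⟩
    refine ⟨h1, h2, ?_⟩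
    -- use continuity of `q ↦ |q₁| - c|q₂|^τ` at `p`
    set F : ℂ × ℂ → ℝ := fun q => ‖q.1‖ - c * ‖q.2‖ ^ τ with hF
    have hcont : ContinuousAt F p := by
      apply ContinuousAt.sub
      · exact (continuous_norm.comp continuous_fst).continuousAt
      · apply ContinuousAt.mul continuousAt_const
        exact (Real.continuousAt_rpow_const _ τ
          (Or.inl (by simpa using h2))).comp
          (continuous_norm.comp continuous_snd).continuousAt
    have hne : (𝓝[A] p).NeBot := mem_closure_iff_nhdsWithin_neBot.mp hcl
    have h0 : Tendsto F (𝓝[A] p) (𝓝 0) := by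
      have : ∀ᶠ q in 𝓝[A] p, F q = 0 := by
        filter_upwards [self_mem_nhdsWithin] with q hq
        have := key q hq
        simp [hF, this]
      exact Tendsto.congr' (Filter.EventuallyEq.symm this) tendsto_const_nhds
    have hFp : Tendsto F (𝓝[A] p) (𝓝 (F p)) := hcont.continuousWithinAt
    have : F p = 0 := tendsto_nhds_unique hFp h0
    have := sub_eq_zero.mp this
    linarith [this]
  · rintro ⟨h1, h2, habs⟩
    refine ⟨?_, h1, h2⟩
    -- set up: `w₀ = log p.2`, `u = c exp(θI + τ w₀)`
    set w₀ : ℂ := Complex.log p.2 with hw₀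
    have hew₀ : Complex.exp w₀ = p.2 := Complex.exp_log h2
    set u : ℂ := (c : ℂ) * Complex.exp ((θ : ℂ) * Complex.I + (τ : ℂ) * w₀) with hu
    have hu0 : u ≠ 0 := mul_ne_zero (by exact_mod_cast hc.ne') (Complex.exp_ne_zero _)
    have habsu : ‖u‖ = ‖p.1‖ := by
      have : (u, Complex.exp w₀) ∈ A := ⟨w₀, rfl⟩
      have := key _ this
      simp only at this
      rw [this, hew₀, habs]
    -- `p.1 / u` is on the unit circle: `p.1 = u * exp(δ I)` for `δ = arg (p.1 / u)`
    set δ : ℝ := Complex.arg (p.1 / u) with hδ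
    have habs_div : ‖p.1 / u‖ = 1 := by
      rw [norm_div, habsu, div_self]
      simpa using fun h => h1 (norm_eq_zero.mp h)
    have hp1 : p.1 = u * Complex.exp ((δ : ℂ) * Complex.I) := by
      have := Complex.norm_mul_exp_arg_mul_I (p.1 / u)
      rw [habs_div] at this
      field_simp at this ⊢
      rw [mul_comm]
      rw [hδ, mul_comm Complex.I]
      push_cast at this
      linear_combination -this
    -- density: approximate `δ / (2π)` by `m + k τ`
    have hdense := dense_int_add_int_smul τ hτ
    obtain ⟨s, hs_mem, hs_lim⟩ :=
      mem_closure_iff_seq_limit.mp (hdense (δ / (2 * Real.pi)))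
    -- extract integer coefficients
    have hex : ∀ n, ∃ m k : ℤ, s n = (m : ℝ) + (k : ℝ) * τ := by
      intro n
      have := hs_mem n
      rw [SetLike.mem_coe, AddSubgroup.mem_sup] at this
      obtain ⟨y, hy, z, hz, hyz⟩ := this
      rw [AddSubgroup.mem_zmultiples_iff] at hy hz
      obtain ⟨m, hm⟩ := hy
      obtain ⟨k, hk⟩ := hz
      exact ⟨m, k, by rw [← hyz, ← hm, ← hk]; push_cast [zsmul_eq_mul]; ring⟩
    choose mk kk hmk using hex
    -- the approximating sequence in `A`
    refine mem_closure_iff_seq_limit.mpr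
      ⟨fun n => ((c : ℂ) * Complex.exp ((θ : ℂ) * Complex.I
          + (τ : ℂ) * (w₀ + (2 * Real.pi * (kk n) : ℝ) * Complex.I)),
        Complex.exp (w₀ + (2 * Real.pi * (kk n) : ℝ) * Complex.I)), fun n => ⟨_, rfl⟩, ?_⟩
    -- compute the sequence explicitly
    have hsnd : ∀ n, Complex.exp (w₀ + (2 * Real.pi * (kk n) : ℝ) * Complex.I) = p.2 := by
      intro n
      rw [Complex.exp_add, hew₀]
      have : ((2 * Real.pi * (kk n) : ℝ) : ℂ) * Complex.I
          = (kk n : ℤ) * (2 * Real.pi * Complex.I) := by push_cast; ring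
      rw [this, Complex.exp_int_mul_two_pi_mul_I, mul_one]
    have hfst : ∀ n, (c : ℂ) * Complex.exp ((θ : ℂ) * Complex.I
          + (τ : ℂ) * (w₀ + (2 * Real.pi * (kk n) : ℝ) * Complex.I))
        = u * Complex.exp (((2 * Real.pi * s n : ℝ) : ℂ) * Complex.I) := by
      intro n
      have harg : Complex.exp ((θ : ℂ) * Complex.I
            + (τ : ℂ) * (w₀ + (2 * Real.pi * (kk n) : ℝ) * Complex.I))
          = Complex.exp (((θ : ℂ) * Complex.I + (τ : ℂ) * w₀)
            + ((2 * Real.pi * s n : ℝ) : ℂ) * Complex.I) := by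
        rw [Complex.exp_eq_exp_iff_exists_int]
        refine ⟨-(mk n), ?_⟩
        have hsn : (s n : ℝ) = (mk n : ℝ) + (kk n : ℝ) * τ := hmk n
        push_cast [hsn]
        ring
      rw [harg, Complex.exp_add, hu]
      ring
    -- convergence
    have hconv : Tendsto (fun n => u * Complex.exp (((2 * Real.pi * s n : ℝ) : ℂ) * Complex.I))
        atTop (𝓝 p.1) := by
      rw [hp1]
      apply Tendsto.const_mul
      have hlim : Tendsto (fun n => (2 * Real.pi * s n : ℝ)) atTop (𝓝 δ) := by
        have h2 : 2 * Real.pi * (δ / (2 * Real.pi)) = δ := by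
          have hπ : (2 : ℝ) * Real.pi ≠ 0 := by positivity
          field_simp
        simpa [h2] using hs_lim.const_mul (2 * Real.pi)
      have hc2 : Continuous fun t : ℝ => Complex.exp ((t : ℂ) * Complex.I) :=
        Complex.continuous_exp.comp ((Complex.continuous_ofReal).mul continuous_const)
      exact (hc2.continuousAt.tendsto.comp hlim)
    rw [show p = (p.1, p.2) from rfl]
    refine Tendsto.prodMk_nhds ?_ ?_
    · simpa only [hfst] using hconv
    · simpa only [hsnd] using tendsto_const_nhds
end

section
/- Let a₁, a₂ be complex numbers with 0 < |a₁| ≤ |a₂| < 1 such that a₁^k ≠ a₂^l for every pair of natural numbers (k, l) ≠ (0, 0), and let j be a natural number. Let g : ℂ × ℂ → ℂ be an entire function (complex differentiable on all of ℂ²) satisfying g(a₁ z₁, a₂ z₂) = a₁^j · g(z₁, z₂) for all (z₁, z₂) ∈ ℂ². Then there exists c ∈ ℂ such that g(z₁, z₂) = c · z₁^j for all (z₁, z₂) ∈ ℂ². -/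
open Complex Polynomial Finset Metric
open scoped Nat

/-- If an entire function satisfies `f (a z) = b f z` and `a ^ n ≠ b`, then the `n`-th
Taylor coefficient of `f` at `0` vanishes. -/
lemma stmt9_taylor_coeff_zero {a b : ℂ} {f : ℂ → ℂ} (hf : Differentiable ℂ f)
    (hfe : ∀ z, f (a * z) = b * f z) (n : ℕ) (hn : a ^ n ≠ b) :
    iteratedDeriv n f 0 = 0 := by
  have h1 : iteratedDeriv n (fun z => f (a * z)) 0 = a ^ n * iteratedDeriv n f 0 := by
    rw [iteratedDeriv_comp_const_mul hf.contDiff a]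
    simp
  have h2 : iteratedDeriv n (fun z => f (a * z)) 0 = b * iteratedDeriv n f 0 := by
    have hfun : (fun z => f (a * z)) = fun z => b * f z := funext hfe
    rw [hfun, ← iteratedDerivWithin_univ, ← iteratedDerivWithin_univ,
      iteratedDerivWithin_const_mul_field b f]
  by_contra hD
  exact hn (mul_right_cancel₀ hD (h1.symm.trans h2))

lemma stmt9_eq_zero_of_coeffs {f : ℂ → ℂ} (hf : Differentiable ℂ f)
    (h : ∀ n : ℕ, iteratedDeriv n f 0 = 0) : ∀ z, f z = 0 := by
  intro z
  have hs := Complex.hasSum_taylorSeries_of_entire hf 0 z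
  have h0 : (fun n : ℕ => (n ! : ℂ)⁻¹ • (z - 0) ^ n • iteratedDeriv n f 0)
      = fun _ => (0 : ℂ) := by
    funext n; simp [h]
  rw [h0] at hs
  exact hs.unique hasSum_zero

lemma stmt9_eq_monomial {f : ℂ → ℂ} (hf : Differentiable ℂ f) (j : ℕ)
    (h : ∀ n : ℕ, n ≠ j → iteratedDeriv n f 0 = 0) :
    ∀ z, f z = ((j ! : ℂ)⁻¹ * iteratedDeriv j f 0) * z ^ j := by
  intro z
  have hs := Complex.hasSum_taylorSeries_of_entire hf 0 z
  have h2 := hasSum_single (f := fun n : ℕ => (n ! : ℂ)⁻¹ • (z - 0) ^ n • iteratedDeriv n f 0) j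
    (fun n hn => by simp [h n hn])
  have := hs.unique h2
  rw [this]
  simp only [smul_eq_mul, sub_zero]
  ring

/-- An entire function with polynomial growth of degree `N` is a polynomial of degree ≤ N. -/
lemma stmt9_poly_of_growth : ∀ (N : ℕ) (f : ℂ → ℂ), Differentiable ℂ f →
    ∀ C : ℝ, (∀ w, ‖f w‖ ≤ C * max 1 (‖w‖) ^ N) →
    ∃ p : Polynomial ℂ, p.degree ≤ N ∧ ∀ w, f w = p.eval w := by
  intro N
  induction N with
  | zero =>
    intro f hf C hC
    refine ⟨Polynomial.C (f 0), degree_C_le.trans (by exact_mod_cast le_refl _), fun w => ?_⟩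
    rw [eval_C]
    apply hf.apply_eq_apply_of_bounded
    refine isBounded_iff_forall_norm_le.2 ⟨C, ?_⟩
    rintro x ⟨w, rfl⟩
    simpa using hC w
  | succ N ih =>
    intro f hf C hC
    set h : ℂ → ℂ := dslope f 0 with hh
    have hd : Differentiable ℂ h := by
      intro z
      rcases eq_or_ne z 0 with rfl | hz
      · obtain ⟨p, hp⟩ := hf.analyticAt 0
        exact (hp.has_fpower_series_dslope_fslope).differentiableAt
      · exact (differentiableAt_dslope_of_ne hz).mpr (hf.differentiableAt)
    obtain ⟨M, hM⟩ := (isCompact_closedBall (0 : ℂ) 1).exists_bound_of_continuousOn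
      hd.continuous.continuousOn
    set C' : ℝ := max M (C + ‖f 0‖) with hC'
    have hM0 : 0 ≤ M := le_trans (norm_nonneg (h 0)) (hM 0 (mem_closedBall_self zero_le_one))
    have hC'0 : 0 ≤ C' := le_trans hM0 (le_max_left _ _)
    have hb : ∀ w, ‖h w‖ ≤ C' * max 1 (‖w‖) ^ N := by
      intro w
      have hpow1 : (1 : ℝ) ≤ max 1 (‖w‖) ^ N := one_le_pow₀ (le_max_left _ _)
      rcases le_or_gt (‖w‖) 1 with hw | hw
      · calc ‖h w‖ ≤ M := hM w (by simpa [mem_closedBall, Complex.dist_eq] using hw)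
          _ ≤ C' := le_max_left _ _
          _ ≤ C' * max 1 (‖w‖) ^ N := le_mul_of_one_le_right hC'0 hpow1
      · have hw0 : w ≠ 0 := by
          intro h0; rw [h0] at hw; simp at hw; linarith
        have hwpos : (0 : ℝ) < ‖w‖ := lt_trans one_pos hw
        have hmax : max 1 (‖w‖) = ‖w‖ := max_eq_right hw.le
        have hhw : h w = (f w - f 0) / w := by
          rw [hh, dslope_of_ne _ hw0, slope_def_field]
          simp
        have hfw : ‖f w‖ ≤ C * ‖w‖ ^ (N + 1) := by
          have := hC w; rwa [hmax] at this
        have hpow1' : (1 : ℝ) ≤ ‖w‖ ^ (N + 1) := one_le_pow₀ hw.le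
        calc ‖h w‖ = ‖f w - f 0‖ / ‖w‖ := by
              rw [hhw, norm_div]
          _ ≤ (‖f w‖ + ‖f 0‖) / ‖w‖ := by
              gcongr
              exact norm_sub_le (f w) (f 0)
          _ ≤ ((C + ‖f 0‖) * ‖w‖ ^ (N + 1)) / ‖w‖ := by
              gcongr
              rw [add_mul]
              exact add_le_add hfw (le_mul_of_one_le_right (norm_nonneg _) hpow1')
          _ = (C + ‖f 0‖) * ‖w‖ ^ N := by
              rw [pow_succ]; field_simp
          _ ≤ C' * max 1 (‖w‖) ^ N := by
              rw [hmax]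
              exact mul_le_mul_of_nonneg_right (le_max_right _ _)
                (pow_nonneg (norm_nonneg _) _)
    obtain ⟨q, hq, hfq⟩ := ih h hd C' hb
    refine ⟨Polynomial.C (f 0) + Polynomial.X * q, ?_, fun w => ?_⟩
    · apply le_trans (degree_add_le _ _)
      apply max_le
      · exact degree_C_le.trans (by exact_mod_cast Nat.zero_le (N + 1))
      · calc degree (Polynomial.X * q) ≤ degree (Polynomial.X : ℂ[X]) + degree q :=
            degree_mul_le _ _
          _ ≤ 1 + (N : WithBot ℕ) := add_le_add degree_X_le hq
          _ = ((N + 1 : ℕ) : WithBot ℕ) := by rw [Nat.cast_add, Nat.cast_one, add_comm]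
    · have hsub := sub_smul_dslope f 0 w
      simp only [sub_zero, smul_eq_mul] at hsub
      rw [eval_add, eval_C, eval_mul, eval_X, ← hfq w]
      rw [← hh] at hsub
      linear_combination (-1 : ℂ) * hsub

/-- Under the non-resonance condition, an entire function `g` on `ℂ²` with
`g(a₁z₁, a₂z₂) = a₁^j · g(z₁,z₂)` is of the form `g(z₁,z₂) = c · z₁^j`. -/
theorem stmt_9 (a₁ a₂ : ℂ)
    (h₁ : 0 < ‖a₁‖) (h₁₂ : ‖a₁‖ ≤ ‖a₂‖)
    (h₂ : ‖a₂‖ < 1)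
    (hres : ∀ k l : ℕ, (k, l) ≠ (0, 0) → a₁ ^ k ≠ a₂ ^ l)
    (j : ℕ) (g : ℂ × ℂ → ℂ) (hg : Differentiable ℂ g)
    (heq : ∀ z : ℂ × ℂ, g (a₁ * z.1, a₂ * z.2) = a₁ ^ j * g z) :
    ∃ c : ℂ, ∀ z : ℂ × ℂ, g z = c * z.1 ^ j := by
  have ha₁ : a₁ ≠ 0 := norm_pos_iff.mp h₁
  have h₂pos : (0 : ℝ) < ‖a₂‖ := lt_of_lt_of_le h₁ h₁₂
  have ha₂ : a₂ ≠ 0 := norm_pos_iff.mp h₂pos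
  have h₁lt : ‖a₁‖ < 1 := lt_of_le_of_lt h₁₂ h₂
  -- iterated functional equation
  have hiter : ∀ (n : ℕ) (z : ℂ × ℂ), g (a₁ ^ n * z.1, a₂ ^ n * z.2) = a₁ ^ (n * j) * g z := by
    intro n
    induction n with
    | zero => intro z; simp
    | succ n ih =>
      intro z
      have h1 : ((a₁ ^ (n + 1) * z.1 : ℂ), (a₂ ^ (n + 1) * z.2 : ℂ))
          = (a₁ * (a₁ ^ n * z.1), a₂ * (a₂ ^ n * z.2)) := by
        simp only [Prod.mk.injEq]
        constructor <;> ring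
      rw [h1]
      have h2 := heq (a₁ ^ n * z.1, a₂ ^ n * z.2)
      dsimp at h2
      rw [h2, ih z]
      ring
  -- choose N with |a₂|^N ≤ |a₁|^j
  obtain ⟨N, hN⟩ : ∃ N : ℕ, ‖a₂‖ ^ N ≤ ‖a₁‖ ^ j := by
    obtain ⟨n, hn⟩ := exists_pow_lt_of_lt_one (pow_pos h₁ j) h₂
    exact ⟨n, hn.le⟩
  -- growth bound on slices
  have growth : ∀ z₁ : ℂ, ∃ C : ℝ,
      ∀ w : ℂ, ‖g (z₁, w)‖ ≤ C * max 1 (‖w‖) ^ N := by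
    intro z₁
    set R : ℝ := max 1 (‖z₁‖) with hR
    have hR1 : (1 : ℝ) ≤ R := le_max_left _ _
    obtain ⟨M, hM⟩ := ((isCompact_closedBall (0 : ℂ) R).prod
      (isCompact_closedBall (0 : ℂ) 1)).exists_bound_of_continuousOn
      hg.continuous.continuousOn
    have hM0 : 0 ≤ M := by
      refine le_trans (norm_nonneg (g (0, 0))) (hM (0, 0) ?_)
      exact ⟨mem_closedBall_self (by linarith), mem_closedBall_self zero_le_one⟩
    refine ⟨M * ((‖a₂‖)⁻¹) ^ N, fun w => ?_⟩
    have hex : ∃ n : ℕ, ‖a₂‖ ^ n * ‖w‖ ≤ 1 := by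
      rcases eq_or_ne w 0 with rfl | hw0
      · exact ⟨0, by simp⟩
      · have hwpos : (0 : ℝ) < ‖w‖ := norm_pos_iff.mpr hw0
        obtain ⟨n, hn⟩ := exists_pow_lt_of_lt_one (show (0:ℝ) < (‖w‖)⁻¹ by positivity) h₂
        exact ⟨n, by rw [← le_div_iff₀ hwpos, div_eq_inv_mul, mul_one]; exact hn.le⟩
    obtain ⟨n, hn, hminall⟩ : ∃ n, ‖a₂‖ ^ n * ‖w‖ ≤ 1 ∧
        ∀ m < n, ¬(‖a₂‖ ^ m * ‖w‖ ≤ 1) :=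
      ⟨Nat.find hex, Nat.find_spec hex, fun m hm => Nat.find_min hex hm⟩
    -- the key identity
    have hkey : ‖g (z₁, w)‖
        = (‖a₁‖ ^ (n * j))⁻¹ * ‖g (a₁ ^ n * z₁, a₂ ^ n * w)‖ := by
      have h := hiter n (z₁, w)
      dsimp at h
      rw [h, norm_mul, norm_pow]
      field_simp
    -- bound the g-value
    have hmem : (a₁ ^ n * z₁, a₂ ^ n * w) ∈
        (closedBall (0:ℂ) R) ×ˢ (closedBall (0:ℂ) 1) := by
      constructor
      · rw [mem_closedBall_zero_iff]
        calc ‖a₁ ^ n * z₁‖ = ‖a₁‖ ^ n * ‖z₁‖ := by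
              simp [norm_mul, norm_pow]
          _ ≤ 1 * ‖z₁‖ := by
              apply mul_le_mul_of_nonneg_right (pow_le_one₀ h₁.le h₁lt.le) (norm_nonneg _)
          _ ≤ R := by rw [one_mul]; exact le_max_right _ _
      · rw [mem_closedBall_zero_iff]
        calc ‖a₂ ^ n * w‖ = ‖a₂‖ ^ n * ‖w‖ := by
              simp [norm_mul, norm_pow]
          _ ≤ 1 := hn
    have hbound : ‖g (a₁ ^ n * z₁, a₂ ^ n * w)‖ ≤ M := hM _ hmem
    -- bound the scaling factor
    have hscale : (‖a₁‖ ^ (n * j))⁻¹ ≤ ((‖a₂‖)⁻¹ * max 1 (‖w‖)) ^ N := by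
      have step1 : ‖a₂‖ ^ (n * N) ≤ ‖a₁‖ ^ (n * j) := by
        rw [mul_comm n N, mul_comm n j, pow_mul, pow_mul]
        exact pow_le_pow_left₀ (pow_nonneg h₂pos.le _) hN n
      have step2 : (‖a₁‖ ^ (n * j))⁻¹ ≤ (‖a₂‖ ^ (n * N))⁻¹ := by
        apply inv_anti₀ (pow_pos h₂pos _) step1
      refine le_trans step2 ?_
      rw [pow_mul, ← inv_pow]
      apply pow_le_pow_left₀ (by positivity)
      -- (|a₂|^n)⁻¹ ≤ |a₂|⁻¹ * max 1 |w|
      have hinv1 : (1:ℝ) ≤ (‖a₂‖)⁻¹ := by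
        rw [le_inv_comm₀ one_pos h₂pos]
        simpa using h₂.le
      rcases Nat.eq_zero_or_pos n with hn0 | hnpos
      · rw [hn0, pow_zero, inv_one]
        calc (1:ℝ) ≤ (‖a₂‖)⁻¹ * 1 := by simpa using hinv1
          _ ≤ (‖a₂‖)⁻¹ * max 1 (‖w‖) := by
              exact mul_le_mul_of_nonneg_left (le_max_left _ _) (by positivity)
      · obtain ⟨m, rfl⟩ := Nat.exists_eq_succ_of_ne_zero hnpos.ne'
        have hmin : ¬ (‖a₂‖ ^ m * ‖w‖ ≤ 1) :=
          hminall m (Nat.lt_succ_self m)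
        push_neg at hmin
        have hppos : (0:ℝ) < ‖a₂‖ ^ m := pow_pos h₂pos m
        have hlt : (‖a₂‖ ^ m)⁻¹ ≤ ‖w‖ := by
          rw [← one_div, div_le_iff₀ hppos, mul_comm]
          linarith
        calc (‖a₂‖ ^ (m + 1))⁻¹
            = (‖a₂‖)⁻¹ * (‖a₂‖ ^ m)⁻¹ := by
              rw [pow_succ, mul_inv, mul_comm]
          _ ≤ (‖a₂‖)⁻¹ * max 1 (‖w‖) := by
              apply mul_le_mul_of_nonneg_left (le_trans hlt (le_max_right _ _)) (by positivity)
    calc ‖g (z₁, w)‖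
        = (‖a₁‖ ^ (n * j))⁻¹ * ‖g (a₁ ^ n * z₁, a₂ ^ n * w)‖ := hkey
      _ ≤ ((‖a₂‖)⁻¹ * max 1 (‖w‖)) ^ N * M := by
          apply mul_le_mul hscale hbound (norm_nonneg _) (by positivity)
      _ = M * ((‖a₂‖)⁻¹) ^ N * max 1 (‖w‖) ^ N := by
          rw [mul_pow]; ring
  -- coefficient functions via Lagrange interpolation
  set s : Finset ℕ := Finset.range (N + 1) with hs
  set v : ℕ → ℂ := fun m => (m : ℂ) with hv
  set e : ℕ → ℂ → ℂ :=
    fun l z₁ => ∑ i ∈ s, g (z₁, v i) * (Lagrange.basis s v i).coeff l with he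
  have he_diff : ∀ l, Differentiable ℂ (e l) := by
    intro l
    apply Differentiable.fun_sum
    intro i _
    exact (hg.comp ((differentiable_id).prodMk (differentiable_const _))).mul_const _
  have hrep : ∀ z₁ w : ℂ, g (z₁, w) = ∑ l ∈ s, e l z₁ * w ^ l := by
    intro z₁ w
    obtain ⟨C, hC⟩ := growth z₁
    have hslice : Differentiable ℂ (fun w => g (z₁, w)) :=
      hg.comp ((differentiable_const z₁).prodMk differentiable_id)
    obtain ⟨p, hpdeg, hpf⟩ := stmt9_poly_of_growth N _ hslice C hC
    have hinj : Set.InjOn v s := fun x _ y _ hxy => Nat.cast_injective hxy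
    have hdeg : p.degree < s.card := by
      rw [hs, Finset.card_range]
      exact lt_of_le_of_lt hpdeg (by exact_mod_cast Nat.lt_succ_self N)
    have hp_interp : p = Lagrange.interpolate s v fun i => p.eval (v i) :=
      Lagrange.eq_interpolate hinj hdeg
    have hcoeff : ∀ l, p.coeff l = e l z₁ := by
      intro l
      conv_lhs => rw [hp_interp]
      rw [Lagrange.interpolate_apply, finset_sum_coeff]
      refine Finset.sum_congr rfl fun i _ => ?_
      rw [coeff_C_mul, ← hpf (v i)]
    have hnat : p.natDegree < N + 1 := Nat.lt_succ_of_le (natDegree_le_iff_degree_le.mpr hpdeg)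
    calc g (z₁, w) = p.eval w := hpf w
      _ = ∑ l ∈ Finset.range (N + 1), p.coeff l * w ^ l := eval_eq_sum_range' hnat w
      _ = ∑ l ∈ s, e l z₁ * w ^ l := by
          rw [hs]
          exact Finset.sum_congr rfl fun l _ => by rw [hcoeff]
  -- coefficient functional equations
  have hceq : ∀ l ∈ s, ∀ z₁ : ℂ, e l (a₁ * z₁) * a₂ ^ l = a₁ ^ j * e l z₁ := by
    intro l hl z₁
    have hfun : ∀ w : ℂ, ∑ m ∈ s, (e m (a₁ * z₁) * a₂ ^ m) * w ^ m
        = ∑ m ∈ s, (a₁ ^ j * e m z₁) * w ^ m := by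
      intro w
      have h2 := heq (z₁, w)
      dsimp at h2
      rw [hrep z₁ w, hrep (a₁ * z₁) (a₂ * w), Finset.mul_sum] at h2
      calc ∑ m ∈ s, (e m (a₁ * z₁) * a₂ ^ m) * w ^ m
          = ∑ m ∈ s, e m (a₁ * z₁) * (a₂ * w) ^ m := by
            refine Finset.sum_congr rfl fun m _ => ?_
            rw [mul_pow]; ring
        _ = ∑ m ∈ s, a₁ ^ j * (e m z₁ * w ^ m) := h2
        _ = ∑ m ∈ s, (a₁ ^ j * e m z₁) * w ^ m := by
            refine Finset.sum_congr rfl fun m _ => ?_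
            ring
    have hP : (∑ m ∈ s, Polynomial.C (e m (a₁ * z₁) * a₂ ^ m) * Polynomial.X ^ m)
        = ∑ m ∈ s, Polynomial.C (a₁ ^ j * e m z₁) * Polynomial.X ^ m := by
      apply Polynomial.funext
      intro w
      rw [eval_finset_sum, eval_finset_sum]
      simpa only [eval_mul, eval_C, eval_pow, eval_X] using hfun w
    have hcl := congrArg (fun p => Polynomial.coeff p l) hP
    simp only [finset_sum_coeff, coeff_C_mul, coeff_X_pow, mul_ite, mul_one, mul_zero] at hcl
    rwa [Finset.sum_ite_eq s l _, Finset.sum_ite_eq s l _, if_pos hl, if_pos hl] at hcl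
  -- the zeroth coefficient is c * z^j
  have hl0eq : ∀ z₁ : ℂ, e 0 (a₁ * z₁) = a₁ ^ j * e 0 z₁ := by
    intro z₁
    have := hceq 0 (by simp [hs]) z₁
    simpa using this
  have hje : ∀ n : ℕ, n ≠ j → iteratedDeriv n (e 0) 0 = 0 := by
    intro n hn
    refine stmt9_taylor_coeff_zero (he_diff 0) hl0eq n ?_
    intro hcon
    apply hn
    have habs : ‖a₁‖ ^ n = ‖a₁‖ ^ j := by
      rw [← norm_pow, ← norm_pow, hcon]
    rcases lt_trichotomy n j with hnj | hnj | hnj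
    · exfalso
      have := pow_lt_pow_right_of_lt_one₀ h₁ h₁lt hnj
      rw [habs] at this
      exact lt_irrefl _ this
    · exact hnj
    · exfalso
      have := pow_lt_pow_right_of_lt_one₀ h₁ h₁lt hnj
      rw [habs] at this
      exact lt_irrefl _ this
  -- higher coefficients vanish
  have hhigher : ∀ l ∈ s, l ≠ 0 → ∀ z : ℂ, e l z = 0 := by
    intro l hl hl0
    apply stmt9_eq_zero_of_coeffs (he_diff l)
    intro n
    have hfe : ∀ z₁ : ℂ, e l (a₁ * z₁) = (a₁ ^ j / a₂ ^ l) * e l z₁ := by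
      intro z₁
      have h := hceq l hl z₁
      field_simp
      linear_combination h
    refine stmt9_taylor_coeff_zero (he_diff l) hfe n ?_
    intro hcon
    have hl1 : 1 ≤ l := Nat.one_le_iff_ne_zero.mpr hl0
    have hmul : a₁ ^ n * a₂ ^ l = a₁ ^ j := by
      rw [hcon, div_mul_cancel₀ _ (pow_ne_zero l ha₂)]
    rcases le_or_gt n j with hnj | hnj
    · have hsplit : a₁ ^ n * a₁ ^ (j - n) = a₁ ^ j := by
        rw [← pow_add, Nat.add_sub_cancel' hnj]
      have h2 : a₂ ^ l = a₁ ^ (j - n) :=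
        mul_left_cancel₀ (pow_ne_zero n ha₁) (hmul.trans hsplit.symm)
      refine hres (j - n) l ?_ h2.symm
      intro hpair
      exact hl0 (congrArg Prod.snd hpair)
    · have habs : ‖a₁‖ ^ n * ‖a₂‖ ^ l = ‖a₁‖ ^ j := by
        rw [← norm_pow, ← norm_pow, ← norm_mul, hmul, norm_pow]
      have hlt : ‖a₁‖ ^ n * ‖a₂‖ ^ l < ‖a₁‖ ^ j := by
        calc ‖a₁‖ ^ n * ‖a₂‖ ^ l
            ≤ ‖a₁‖ ^ j * ‖a₂‖ ^ l := by
              apply mul_le_mul_of_nonneg_right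
                (pow_le_pow_of_le_one h₁.le h₁lt.le hnj.le) (by positivity)
          _ < ‖a₁‖ ^ j * 1 := by
              apply mul_lt_mul_of_pos_left (pow_lt_one₀ h₂pos.le h₂ hl0) (pow_pos h₁ j)
          _ = ‖a₁‖ ^ j := mul_one _
      exact absurd habs hlt.ne
  -- conclusion
  refine ⟨(j ! : ℂ)⁻¹ * iteratedDeriv j (e 0) 0, fun z => ?_⟩
  have he0 := stmt9_eq_monomial (he_diff 0) j hje
  have hz : g z = g (z.1, z.2) := by rw [Prod.mk.eta]
  rw [hz, hrep z.1 z.2]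
  rw [Finset.sum_eq_single 0 (fun l hl hne => by rw [hhigher l hl hne]; ring)
    (fun h0 => absurd (by simp [hs] : (0:ℕ) ∈ s) h0)]
  rw [he0 z.1]
  ring
end
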